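/- arXiv:2303.03079 — 10 statements merged into one kernel-verified Lean document; each statement's English description precedes it below -/
import Mathlib

section
/- Let F_q be a finite field, let n and k be positive integers, and let H_X and H_Z be k×n matrices over F_q. Let C ⊆ F_q^{2n} be the row space of the k×2n matrix (H_X | H_Z). Then rank(H_X·H_Zᵀ − H_Z·H_Xᵀ) = dim_{F_q} C − dim_{F_q}(C ∩ C^{⊥s}). -/
open Matrix

/-- The dual of a subspace `C ⊆ F^n × F^n` with respect to the symplectic product
`(x|y)·ₛ(z|w) = x·w - z·y`. -/
def sympDual {F : Type*} [Field F] {n : ℕ}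
    (C : Submodule F ((Fin n → F) × (Fin n → F))) :
    Submodule F ((Fin n → F) × (Fin n → F)) where
  carrier := { v | ∀ u ∈ C, u.1 ⬝ᵥ v.2 - v.1 ⬝ᵥ u.2 = 0 }
  add_mem' := by
    intro a b ha hb u hu
    have h1 := ha u hu
    have h2 := hb u hu
    simp only [Prod.fst_add, Prod.snd_add, dotProduct_add, add_dotProduct]
    linear_combination h1 + h2
  zero_mem' := by
    intro u hu
    simp
  smul_mem' := by
    intro c v hv u hu
    have h := hv u hu
    simp only [Prod.smul_fst, Prod.smul_snd, dotProduct_smul, smul_dotProduct,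
      smul_eq_mul]
    linear_combination c * h

/-- For the row space `C` of `(H_X | H_Z)`,
`rank (H_X·H_Zᵀ - H_Z·H_Xᵀ) = dim C - dim (C ∩ C^⊥ₛ)`. -/
theorem stmt_0 {F : Type*} [Field F] [Fintype F] {n k : ℕ} (hn : 0 < n) (hk : 0 < k)
    (HX HZ : Matrix (Fin k) (Fin n) F)
    (C : Submodule F ((Fin n → F) × (Fin n → F)))
    (hC : C = Submodule.span F (Set.range fun i : Fin k => (HX i, HZ i))) :
    (HX * HZᵀ - HZ * HXᵀ).rank =
      Module.finrank F C - Module.finrank F ↥(C ⊓ sympDual C) := by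
  classical
  set g : Fin k → (Fin n → F) × (Fin n → F) := fun i => (HX i, HZ i) with hg
  -- the "symplectic pairing against the rows" map
  set A : ((Fin n → F) × (Fin n → F)) →ₗ[F] (Fin k → F) :=
    { toFun := fun v i => HX i ⬝ᵥ v.2 - v.1 ⬝ᵥ HZ i
      map_add' := by
        intro a b
        funext i
        simp [dotProduct_add, add_dotProduct]
        ring
      map_smul' := by
        intro c v
        funext i
        simp [dotProduct_smul, smul_dotProduct, smul_eq_mul]
        ring } with hA
  set G : (Fin k → F) →ₗ[F] ((Fin n → F) × (Fin n → F)) :=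
    Fintype.linearCombination F g with hG
  have hGr : LinearMap.range G = C := by
    rw [hG, Fintype.range_linearCombination, hC]
  have hcomp : (HX * HZᵀ - HZ * HXᵀ).mulVecLin = A ∘ₗ G := by
    apply LinearMap.ext
    intro x
    funext i
    simp only [mulVecLin_apply, LinearMap.comp_apply, hG,
      Fintype.linearCombination_apply, hA, LinearMap.coe_mk, AddHom.coe_mk,
      mulVec, dotProduct, Matrix.sub_apply, Matrix.mul_apply, transpose_apply,
      Finset.sum_apply, Prod.fst_sum, Prod.snd_sum, Prod.smul_fst,
      Prod.smul_snd, Pi.smul_apply, smul_eq_mul, hg,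
      Finset.sum_sub_distrib, Finset.sum_mul, Finset.mul_sum]
    simp only [sub_mul, Finset.sum_sub_distrib, Finset.sum_mul]
    congr 1
    · rw [Finset.sum_comm]
      exact Finset.sum_congr rfl fun j _ => Finset.sum_congr rfl fun m _ => by ring
    · rw [Finset.sum_comm]
      exact Finset.sum_congr rfl fun j _ => Finset.sum_congr rfl fun m _ => by ring
  have hker : LinearMap.ker A = sympDual C := by
    ext v
    constructor
    · intro hv u hu
      rw [hC] at hu
      induction hu using Submodule.span_induction with
      | mem u hu =>
        obtain ⟨i, rfl⟩ := hu
        have := congrFun hv i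
        simpa [hA] using this
      | zero => simp
      | add u w _ _ h1 h2 =>
        simp only [Prod.fst_add, Prod.snd_add, add_dotProduct, dotProduct_add]
        linear_combination h1 + h2
      | smul c u _ h1 =>
        simp only [Prod.smul_fst, Prod.smul_snd, smul_dotProduct,
          dotProduct_smul, smul_eq_mul]
        linear_combination c * h1
    · intro hv
      have : ∀ i, HX i ⬝ᵥ v.2 - v.1 ⬝ᵥ HZ i = 0 := by
        intro i
        exact hv (g i) (hC ▸ Submodule.subset_span ⟨i, rfl⟩)
      funext i
      exact this i
  -- rank computation
  have hrank : (HX * HZᵀ - HZ * HXᵀ).rank =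
      Module.finrank F (Submodule.map A C) := by
    rw [Matrix.rank, hcomp, LinearMap.range_comp, hGr]
  rw [hrank]
  have h1 := (A.domRestrict C).finrank_range_add_finrank_ker
  rw [LinearMap.range_domRestrict, LinearMap.ker_domRestrict] at h1
  have h2 : Module.finrank F ((LinearMap.ker A).comap C.subtype) =
      Module.finrank F ↥(C ⊓ sympDual C) := by
    rw [← Submodule.finrank_map_subtype_eq C ((LinearMap.ker A).comap C.subtype),
      Submodule.map_comap_subtype, hker]
  rw [h2] at h1
  omega
end

section
/- Let F_q be a finite field, let n, r, t be positive integers, let B_r be an r×n matrix and B_t a t×n matrix over F_q, and let A be any t×t matrix over F_q. Let D_A ⊆ F_q^{2n} be the row space of the (t+2r)×2n block matrix with block rows (B_t | A·B_t), (B_r | 0), (0 | B_r). Then dim_{F_q} D_A − dim_{F_q}(D_A ∩ D_A^{⊥s}) equals the rank of the (t+2r)×(t+2r) block matrix M := [[B_tB_tᵀAᵀ − A B_tB_tᵀ, −A B_tB_rᵀ, B_tB_rᵀ], [B_rB_tᵀAᵀ, 0, B_rB_rᵀ], [−B_rB_tᵀ, −B_rB_rᵀ, 0]]. -/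
open Matrix

theorem gram_rank_eq {F V : Type*} [Field F] [AddCommGroup V] [Module F V]
    [FiniteDimensional F V] {ι : Type*} [Fintype ι] [DecidableEq ι]
    (B : V →ₗ[F] V →ₗ[F] F) (v : ι → V) (M : Matrix ι ι F)
    (hM : ∀ i j, M i j = B (v i) (v j))
    (W : Submodule F V)
    (hW : ∀ w, w ∈ W ↔ ∀ u ∈ Submodule.span F (Set.range v), B u w = 0) :
    Module.finrank F (Submodule.span F (Set.range v)) -
      Module.finrank F ↥(Submodule.span F (Set.range v) ⊓ W) = M.rank := by
  classical
  set D := Submodule.span F (Set.range v) with hD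
  -- T w i = B (v i) w
  let T : V →ₗ[F] (ι → F) := LinearMap.pi (fun i => (B (v i)))
  -- L x = ∑ x i • v i
  let L : (ι → F) →ₗ[F] V := Fintype.linearCombination F v
  have hrangeL : LinearMap.range L = D := Fintype.range_linearCombination F v
  have hcomp : M.mulVecLin = T.comp L := by
    apply LinearMap.ext; intro x; funext i
    simp only [mulVecLin_apply, mulVec, dotProduct, LinearMap.comp_apply, T, L,
      Fintype.linearCombination_apply, LinearMap.pi_apply, hM]
    rw [map_sum]
    simp only [LinearMap.map_smul, smul_eq_mul]
    exact Finset.sum_congr rfl fun j _ => mul_comm _ _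
  have hrank : M.rank = Module.finrank F ↥(D.map T) := by
    rw [Matrix.rank, hcomp, LinearMap.range_comp, hrangeL]
  have hker : D ⊓ LinearMap.ker T = D ⊓ W := by
    ext w
    simp only [Submodule.mem_inf, LinearMap.mem_ker, hW]
    constructor
    · rintro ⟨hwD, hT⟩
      refine ⟨hwD, fun u hu => ?_⟩
      induction hu using Submodule.span_induction with
      | mem x hx =>
        obtain ⟨i, rfl⟩ := hx
        have := congrFun hT i
        simpa [T] using this
      | zero => simp
      | add x y _ _ hx hy => simp [hx, hy]
      | smul c x _ hx => simp [hx]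
    · rintro ⟨hwD, h⟩
      refine ⟨hwD, ?_⟩
      funext i
      simpa [T] using h (v i) (Submodule.subset_span ⟨i, rfl⟩)
  have hrn := LinearMap.finrank_range_add_finrank_ker (T.domRestrict D)
  rw [LinearMap.range_domRestrict] at hrn
  have hkerEq : Module.finrank F ↥(LinearMap.ker (T.domRestrict D)) =
      Module.finrank F ↥(D ⊓ W) := by
    rw [LinearMap.ker_domRestrict]
    have h1 : (LinearMap.ker T).comap D.subtype = (D ⊓ LinearMap.ker T).comap D.subtype := by
      ext x; simp [Submodule.mem_comap, x.2]
    rw [h1, hker]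
    exact (Submodule.comapSubtypeEquivOfLe inf_le_left).finrank_eq
  rw [hkerEq] at hrn
  rw [hrank]
  omega


section main
variable {F : Type*} [Field F] {n : ℕ}

noncomputable def sB : ((Fin n → F) × (Fin n → F)) →ₗ[F] ((Fin n → F) × (Fin n → F)) →ₗ[F] F :=
  LinearMap.mk₂ F (fun u w => u.1 ⬝ᵥ w.2 - w.1 ⬝ᵥ u.2)
    (by
      intro a b w
      simp only [Prod.fst_add, Prod.snd_add, add_dotProduct, dotProduct_add]
      ring)
    (by
      intro c a w
      simp only [Prod.smul_fst, Prod.smul_snd, smul_dotProduct, dotProduct_smul, smul_eq_mul]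
      ring)
    (by
      intro a w w'
      simp only [Prod.fst_add, Prod.snd_add, add_dotProduct, dotProduct_add]
      ring)
    (by
      intro c a w
      simp only [Prod.smul_fst, Prod.smul_snd, smul_dotProduct, dotProduct_smul, smul_eq_mul]
      ring)

@[simp] lemma sB_apply (u w : (Fin n → F) × (Fin n → F)) :
    sB u w = u.1 ⬝ᵥ w.2 - w.1 ⬝ᵥ u.2 := LinearMap.mk₂_apply _ _ _ _

lemma mul_transpose_apply {α β : Type*} (P : Matrix α (Fin n) F) (Q : Matrix β (Fin n) F)
    (i : α) (j : β) : (P * Qᵀ) i j = P i ⬝ᵥ Q j := by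
  simp [Matrix.mul_apply, dotProduct]

end main

/-- For the row space `D_A ⊆ F^{2n}` of the block matrix with block rows
`(B_t | A·B_t)`, `(B_r | 0)`, `(0 | B_r)`, one has
`dim D_A - dim (D_A ∩ D_A^⊥ₛ) = rank M`, where `M` is the displayed block matrix. -/
theorem stmt_3 {F : Type*} [Field F] [Fintype F] {n r t : ℕ}
    (hn : 0 < n) (hr : 0 < r) (ht : 0 < t)
    (Br : Matrix (Fin r) (Fin n) F) (Bt : Matrix (Fin t) (Fin n) F)
    (A : Matrix (Fin t) (Fin t) F)
    (DA : Submodule F ((Fin n → F) × (Fin n → F)))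
    (hDA : DA = Submodule.span F (Set.range (Sum.elim
        (fun i : Fin t => ((Bt i, (A * Bt) i) : (Fin n → F) × (Fin n → F)))
        (Sum.elim (fun i : Fin r => ((Br i, 0) : (Fin n → F) × (Fin n → F)))
                  (fun i : Fin r => ((0, Br i) : (Fin n → F) × (Fin n → F)))))))
    (M : Matrix ((Fin t) ⊕ (Fin r ⊕ Fin r)) ((Fin t) ⊕ (Fin r ⊕ Fin r)) F)
    (hM : M = Matrix.fromBlocks (Bt * Btᵀ * Aᵀ - A * (Bt * Btᵀ))
        (Matrix.fromCols (-(A * (Bt * Brᵀ))) (Bt * Brᵀ))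
        (Matrix.fromRows (Br * Btᵀ * Aᵀ) (-(Br * Btᵀ)))
        (Matrix.fromBlocks 0 (Br * Brᵀ) (-(Br * Brᵀ)) 0)) :
    Module.finrank F DA - Module.finrank F ↥(DA ⊓ sympDual DA) = M.rank := by
  classical
  have e1 : Bt * Btᵀ * Aᵀ = Bt * (A * Bt)ᵀ := by rw [transpose_mul, Matrix.mul_assoc]
  have e2 : A * (Bt * Btᵀ) = (A * Bt) * Btᵀ := by rw [Matrix.mul_assoc]
  have e3 : A * (Bt * Brᵀ) = (A * Bt) * Brᵀ := by rw [Matrix.mul_assoc]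
  have e4 : Br * Btᵀ * Aᵀ = Br * (A * Bt)ᵀ := by rw [transpose_mul, Matrix.mul_assoc]
  subst hDA
  refine gram_rank_eq sB _ M ?_ (sympDual _) ?_
  · rintro (i | i | i) (j | j | j) <;>
      simp only [hM, Sum.elim_inl, Sum.elim_inr, sB_apply,
        fromBlocks_apply₁₁, fromBlocks_apply₁₂, fromBlocks_apply₂₁, fromBlocks_apply₂₂,
        fromCols_apply_inl, fromCols_apply_inr, fromRows_apply_inl, fromRows_apply_inr,
        dotProduct_zero, zero_dotProduct, sub_zero, zero_sub,
        Matrix.sub_apply, Matrix.neg_apply, Matrix.zero_apply]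
    · rw [e1, e2, mul_transpose_apply, mul_transpose_apply, dotProduct_comm (Bt j)]
    · rw [e3, mul_transpose_apply, dotProduct_comm]
    · rw [mul_transpose_apply]
    · rw [e4, mul_transpose_apply]
    · rw [mul_transpose_apply]
    · rw [mul_transpose_apply, dotProduct_comm]
    · rw [mul_transpose_apply, dotProduct_comm]
  · intro w
    simp only [sB_apply]
    exact ⟨fun hw u hu => hw u hu, fun h u hu => h u hu⟩
end

section
/- Let F_q be a finite field and let n, r, t, t_ℓ be positive integers with t_ℓ ≤ t. Let B_r be an r×n matrix over F_q and let B_t be a t×n matrix over F_q obtained by stacking a t_ℓ×n matrix B_{t_ℓ} on top of a (t−t_ℓ)×n matrix B_{t_Q}. Assume B_r·B_tᵀ = 0, B_{t_Q}·B_{t_ℓ}ᵀ = 0, B_{t_Q}·B_{t_Q}ᵀ = 0, and that Z := B_{t_ℓ}·B_{t_ℓ}ᵀ is invertible. Let A_0 be a t_ℓ×t_ℓ matrix and A_1 a (t−t_ℓ)×(t−t_ℓ) matrix over F_q, and let A be the t×t block-diagonal matrix with diagonal blocks A_0·Z^{−1} and A_1. Then the (t+2r)×(t+2r) block matrix M :=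 [[B_tB_tᵀAᵀ − A B_tB_tᵀ, −A B_tB_rᵀ, B_tB_rᵀ], [B_rB_tᵀAᵀ, 0, B_rB_rᵀ], [−B_rB_tᵀ, −B_rB_rᵀ, 0]] satisfies rank M = rank(A_0 − A_0ᵀ) + 2·rank(B_r·B_rᵀ), and the (r+t)×(r+t) block matrix [[B_rB_rᵀ, B_rB_tᵀ], [B_tB_rᵀ, B_tB_tᵀ]] has rank equal to rank(B_r·B_rᵀ) + t_ℓ. -/
open Matrix

section aux
variable {F : Type*} [Field F]

lemma range_prodMap' {M M₂ N N₂ : Type*} [AddCommGroup M] [AddCommGroup M₂]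
    [AddCommGroup N] [AddCommGroup N₂] [Module F M] [Module F M₂] [Module F N] [Module F N₂]
    (f : M →ₗ[F] N) (g : M₂ →ₗ[F] N₂) :
    LinearMap.range (f.prodMap g) = (LinearMap.range f).prod (LinearMap.range g) := by
  ext ⟨x, y⟩
  simp only [LinearMap.mem_range, Submodule.mem_prod, Prod.ext_iff, LinearMap.prodMap_apply,
    Prod.exists]
  aesop

def prodEquivProd' {M N : Type*} [AddCommGroup M] [AddCommGroup N]
    [Module F M] [Module F N] (p : Submodule F M) (q : Submodule F N) :
    (p.prod q) ≃ₗ[F] p × q where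
  toFun x := (⟨x.1.1, x.2.1⟩, ⟨x.1.2, x.2.2⟩)
  invFun x := ⟨(x.1.1, x.2.1), x.1.2, x.2.2⟩
  map_add' _ _ := rfl
  map_smul' _ _ := rfl
  left_inv _ := rfl
  right_inv _ := rfl

lemma rank_fromBlocks_diag {m n o p : Type*} [Fintype m] [Fintype n] [Fintype o] [Fintype p]
    [DecidableEq n] [DecidableEq p] (A : Matrix m n F) (D : Matrix o p F) :
    (fromBlocks A 0 0 D).rank = A.rank + D.rank := by
  have key : (fromBlocks A 0 0 D).mulVecLin =
      ((LinearEquiv.sumArrowLequivProdArrow m o F F).symm.toLinearMap.comp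
        ((A.mulVecLin.prodMap D.mulVecLin).comp
          (LinearEquiv.sumArrowLequivProdArrow n p F F).toLinearMap)) := by
    apply LinearMap.ext; intro x
    funext i
    cases i <;>
      simp [fromBlocks_mulVec, LinearEquiv.sumArrowLequivProdArrow, Equiv.sumArrowEquivProdArrow]
  rw [Matrix.rank, key, LinearMap.range_comp, LinearMap.range_comp_of_range_eq_top _
    (LinearEquiv.range _), range_prodMap', LinearEquiv.finrank_map_eq]
  rw [(prodEquivProd' _ _).finrank_eq, Module.finrank_prod]
  rfl

lemma rank_neg' {m n : Type*} [Fintype m] [Fintype n] [DecidableEq n] (A : Matrix m n F) :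
    (-A).rank = A.rank := by
  have h : -A = A * (-1 : Matrix n n F) := by simp
  have hu : IsUnit (-1 : Matrix n n F) := isUnit_one.neg
  rw [h, Matrix.rank_mul_eq_left_of_isUnit_det _ _
    ((Matrix.isUnit_iff_isUnit_det _).mp hu)]

end aux

/-- With `B_t` the stack of `B_{t_ℓ}` over `B_{t_Q}`, `B_r·B_tᵀ = 0`,
`B_{t_Q}·B_{t_ℓ}ᵀ = 0`, `B_{t_Q}·B_{t_Q}ᵀ = 0`, `Z = B_{t_ℓ}·B_{t_ℓ}ᵀ` invertible, and
`A` block-diagonal with blocks `A_0·Z⁻¹` and `A_1`, the block matrix `M` of the Steane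
enlargement has rank `rank(A_0 - A_0ᵀ) + 2·rank(B_r·B_rᵀ)`, and the block matrix
`[[B_rB_rᵀ, B_rB_tᵀ], [B_tB_rᵀ, B_tB_tᵀ]]` has rank `rank(B_r·B_rᵀ) + t_ℓ`. -/
theorem stmt_5 {F : Type*} [Field F] [Fintype F] {n r t tl : ℕ}
    (hn : 0 < n) (hr : 0 < r) (ht : 0 < t) (htl : 0 < tl) (hle : tl ≤ t)
    (Br : Matrix (Fin r) (Fin n) F)
    (Btl : Matrix (Fin tl) (Fin n) F) (BtQ : Matrix (Fin (t - tl)) (Fin n) F)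
    (Bt : Matrix (Fin tl ⊕ Fin (t - tl)) (Fin n) F)
    (hBt : Bt = Matrix.fromRows Btl BtQ)
    (h1 : Br * Btᵀ = 0) (h2 : BtQ * Btlᵀ = 0) (h3 : BtQ * BtQᵀ = 0)
    (Z : Matrix (Fin tl) (Fin tl) F) (hZ : Z = Btl * Btlᵀ) (hZinv : IsUnit Z)
    (A0 : Matrix (Fin tl) (Fin tl) F) (A1 : Matrix (Fin (t - tl)) (Fin (t - tl)) F)
    (A : Matrix (Fin tl ⊕ Fin (t - tl)) (Fin tl ⊕ Fin (t - tl)) F)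
    (hA : A = Matrix.fromBlocks (A0 * Z⁻¹) 0 0 A1) :
    (Matrix.fromBlocks (Bt * Btᵀ * Aᵀ - A * (Bt * Btᵀ))
        (Matrix.fromCols (-(A * (Bt * Brᵀ))) (Bt * Brᵀ))
        (Matrix.fromRows (Br * Btᵀ * Aᵀ) (-(Br * Btᵀ)))
        (Matrix.fromBlocks 0 (Br * Brᵀ) (-(Br * Brᵀ)) 0)).rank
      = (A0 - A0ᵀ).rank + 2 * (Br * Brᵀ).rank ∧
    (Matrix.fromBlocks (Br * Brᵀ) (Br * Btᵀ) (Bt * Brᵀ) (Bt * Btᵀ)).rank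
      = (Br * Brᵀ).rank + tl := by
  have hZdet : IsUnit Z.det := (Matrix.isUnit_iff_isUnit_det _).mp hZinv
  have hZsymm : Zᵀ = Z := by rw [hZ, transpose_mul, transpose_transpose]
  have h1' : Bt * Brᵀ = 0 := by
    have := congrArg Matrix.transpose h1
    simpa using this
  -- Bt * Btᵀ = fromBlocks Z 0 0 0
  have h2' : Btl * BtQᵀ = 0 := by
    have := congrArg Matrix.transpose h2
    simpa using this
  have hBB : Bt * Btᵀ = fromBlocks Z 0 0 0 := by
    rw [hBt, transpose_fromRows, fromRows_mul_fromCols, h2, h3, h2', hZ]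
  -- top-left block
  have hTL : Bt * Btᵀ * Aᵀ - A * (Bt * Btᵀ) = fromBlocks (A0ᵀ - A0) 0 0 0 := by
    have hZZ : Z * (Z⁻¹ᵀ * A0ᵀ) = A0ᵀ := by
      rw [Matrix.transpose_nonsing_inv, hZsymm, ← Matrix.mul_assoc,
        Matrix.mul_nonsing_inv _ hZdet, Matrix.one_mul]
    have hZZ' : A0 * Z⁻¹ * Z = A0 := by
      rw [Matrix.mul_assoc, Matrix.nonsing_inv_mul _ hZdet, Matrix.mul_one]
    rw [hBB, hA, fromBlocks_transpose, fromBlocks_multiply, fromBlocks_multiply,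
      transpose_mul, hZZ, hZZ']
    ext (i | i) (j | j) <;> simp [Matrix.fromBlocks]
  -- rank of top-left block
  have hTLrank : (Bt * Btᵀ * Aᵀ - A * (Bt * Btᵀ)).rank = (A0 - A0ᵀ).rank := by
    rw [hTL, rank_fromBlocks_diag, Matrix.rank_zero, add_zero]
    have : A0ᵀ - A0 = -(A0 - A0ᵀ) := (neg_sub _ _).symm
    rw [this, rank_neg']
  -- rank of bottom-right block
  set C := Br * Brᵀ with hC
  have hJ : (fromBlocks (0 : Matrix (Fin r) (Fin r) F) C (-C) 0)
      = fromBlocks C 0 0 (-C) * fromBlocks (0 : Matrix (Fin r) (Fin r) F) (1 : Matrix (Fin r) (Fin r) F) (1 : Matrix (Fin r) (Fin r) F) 0 := by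
    rw [fromBlocks_multiply]
    simp
  have hJu : IsUnit (fromBlocks (0 : Matrix (Fin r) (Fin r) F) (1 : Matrix (Fin r) (Fin r) F) (1 : Matrix (Fin r) (Fin r) F) 0) := by
    have hmul : fromBlocks (0 : Matrix (Fin r) (Fin r) F) (1 : Matrix (Fin r) (Fin r) F)
        (1 : Matrix (Fin r) (Fin r) F) 0 *
        fromBlocks (0 : Matrix (Fin r) (Fin r) F) (1 : Matrix (Fin r) (Fin r) F)
        (1 : Matrix (Fin r) (Fin r) F) 0 = 1 := by
      rw [fromBlocks_multiply]
      simp [← fromBlocks_one]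
    exact ⟨⟨_, _, hmul, hmul⟩, rfl⟩
  have hBRrank : (fromBlocks (0 : Matrix (Fin r) (Fin r) F) C (-C) 0).rank = 2 * C.rank := by
    rw [hJ, Matrix.rank_mul_eq_left_of_isUnit_det _ _
      ((Matrix.isUnit_iff_isUnit_det _).mp hJu), rank_fromBlocks_diag, rank_neg', two_mul]
  constructor
  · rw [h1, h1']
    have e1 : Matrix.fromCols (-(A * (0 : Matrix (Fin tl ⊕ Fin (t - tl)) (Fin r) F)))
        (0 : Matrix (Fin tl ⊕ Fin (t - tl)) (Fin r) F) = 0 := by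
      simp [fromCols_zero]
    have e2 : Matrix.fromRows ((0 : Matrix (Fin r) (Fin tl ⊕ Fin (t - tl)) F) * Aᵀ)
        (-(0 : Matrix (Fin r) (Fin tl ⊕ Fin (t - tl)) F)) = 0 := by
      simp [fromRows_zero]
    rw [e1, e2, rank_fromBlocks_diag, hTLrank, hBRrank]
  · rw [h1, h1', hBB, rank_fromBlocks_diag, rank_fromBlocks_diag, Matrix.rank_zero, add_zero,
      Matrix.rank_of_isUnit _ hZinv, Fintype.card_fin]
end

section
/- Let F_q be a finite field, let j ≥ 2 be an integer, let a_0, …, a_{j−1} ∈ F_q, and let L_j be the companion matrix of h(X) = X^j + a_{j−1}X^{j−1} + ⋯ + a_1X + a_0. Then rank(L_j − L_jᵀ) ≥ j − 2. -/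
open Matrix

/-- The companion matrix of the monic polynomial
`X^j + a_{j-1}X^{j-1} + ⋯ + a_1 X + a_0`: the `(i, i+1)` entries are `1`, the last row is
`(-a_0, …, -a_{j-1})`, and all other entries are `0`. -/
def companion {F : Type*} [Field F] (j : ℕ) (a : Fin j → F) : Matrix (Fin j) (Fin j) F :=
  Matrix.of fun i k =>
    if (i : ℕ) = j - 1 then -a k else if (k : ℕ) = (i : ℕ) + 1 then 1 else 0

/-- For `j ≥ 2`, the companion matrix `L_j` of
`X^j + a_{j-1}X^{j-1} + ⋯ + a_0` satisfies `rank (L_j - L_jᵀ) ≥ j - 2`. -/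
theorem stmt_6 {F : Type*} [Field F] [Fintype F] {j : ℕ} (hj : 2 ≤ j) (a : Fin j → F) :
    j - 2 ≤ (companion j a - (companion j a)ᵀ).rank := by
  set M : Matrix (Fin j) (Fin j) F := companion j a - (companion j a)ᵀ with hM
  -- row selector: rows 1, …, j-2
  have hf : ∀ r : Fin (j - 2), (r : ℕ) + 1 < j := fun r => by have := r.isLt; omega
  -- column selector: columns 0, …, j-3
  have hg : ∀ c : Fin (j - 2), (c : ℕ) < j := fun c => by have := c.isLt; omega
  set f : Fin (j - 2) → Fin j := fun r => ⟨(r : ℕ) + 1, hf r⟩ with hfdef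
  set g : Fin (j - 2) → Fin j := fun c => ⟨(c : ℕ), hg c⟩ with hgdef
  set N : Matrix (Fin (j - 2)) (Fin (j - 2)) F := M.submatrix f g with hN
  -- explicit entries of N
  have hentry : ∀ r c : Fin (j - 2), N r c =
      (if (c : ℕ) = (r : ℕ) + 2 then (1 : F) else 0) -
        (if (r : ℕ) = (c : ℕ) then (1 : F) else 0) := by
    intro r c
    have hr := r.isLt
    have hc := c.isLt
    simp only [hN, hM, submatrix_apply, Matrix.sub_apply, transpose_apply, companion, of_apply,
      hfdef, hgdef]
    have h1 : ¬ ((r : ℕ) + 1 = j - 1) := by omega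
    have h2 : ¬ ((c : ℕ) = j - 1) := by omega
    rw [if_neg h1, if_neg h2]
    congr 1
    by_cases h : (r : ℕ) = (c : ℕ)
    · rw [if_pos h, if_pos (by omega)]
    · rw [if_neg h, if_neg (by omega)]
  -- N is upper triangular with -1 on the diagonal
  have htri : N.BlockTriangular id := by
    intro r c hlt
    rw [hentry r c]
    have hlt' : (c : ℕ) < (r : ℕ) := hlt
    rw [if_neg (by omega), if_neg (by omega), sub_zero]
  have hdet : N.det = (-1 : F) ^ (j - 2) := by
    rw [Matrix.det_of_upperTriangular htri]
    have : ∀ r : Fin (j - 2), N r r = -1 := by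
      intro r
      rw [hentry r r, if_neg (by omega), if_pos rfl, zero_sub]
    rw [Finset.prod_congr rfl fun r _ => this r]
    simp
  have hunit : IsUnit N := by
    apply (Matrix.isUnit_iff_isUnit_det N).mpr
    rw [hdet]
    exact (isUnit_one.neg).pow _
  have hrankN : N.rank = j - 2 := by
    rw [Matrix.rank_of_isUnit N hunit, Fintype.card_fin]
  -- N = P * M * Q for selector matrices P, Q
  have hfac : N = ((1 : Matrix (Fin j) (Fin j) F).submatrix f (Equiv.refl _)) * M *
      ((1 : Matrix (Fin j) (Fin j) F).submatrix (Equiv.refl _) g) := by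
    rw [Matrix.one_submatrix_mul f (Equiv.refl _) M,
      Matrix.mul_submatrix_one (Equiv.refl _) g]
    simp [hN]
  calc j - 2 = N.rank := hrankN.symm
    _ ≤ (((1 : Matrix (Fin j) (Fin j) F).submatrix f (Equiv.refl _)) * M).rank := by
        rw [hfac]; exact Matrix.rank_mul_le_left _ _
    _ ≤ M.rank := Matrix.rank_mul_le_right _ _
end

section
/- Let F_q be a finite field, let j ≥ 2 be an odd integer, let a_0, …, a_{j−1} ∈ F_q, and let L_j be the companion matrix of h(X) = X^j + a_{j−1}X^{j−1} + ⋯ + a_1X + a_0. Then rank(L_j − L_jᵀ) = j − 1. -/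
open Matrix
open Finset

section aux
variable {F : Type*} [Field F]

private def bco (j : ℕ) (a : Fin j → F) (i : ℕ) : F :=
  (if h : i < j then a ⟨i, h⟩ else 0) + (if i = j - 2 then 1 else 0)

private def feven (j : ℕ) (a : Fin j → F) (t : ℕ) : F := if t % 2 = 1 then bco j a t else 0
private def fodd (j : ℕ) (a : Fin j → F) (t : ℕ) : F := if t % 2 = 0 then bco j a t else 0

/-- The explicit kernel vector of `L - Lᵀ`, as a function on `ℕ`. -/
private def vn (j : ℕ) (a : Fin j → F) (k : ℕ) : F :=
  if k = j - 1 then 1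
  else if k % 2 = 1 then -(∑ t ∈ Finset.range k, fodd j a t)
  else ∑ t ∈ Finset.Ico (k + 1) (j - 1), feven j a t

private lemma vn_last (j : ℕ) (a : Fin j → F) : vn j a (j - 1) = 1 := by simp [vn]

private lemma bco_eq (j : ℕ) (a : Fin j → F) (i : ℕ) (h : i < j) (h2 : i ≠ j - 2) :
    bco j a i = a ⟨i, h⟩ := by rw [bco, dif_pos h, if_neg h2, add_zero]

private lemma vn_rec (j : ℕ) (a : Fin j → F) (hj3 : 3 ≤ j) (hodd : Odd j)
    (i : ℕ) (hi : i < j - 1) (h : i < j) :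
    vn j a (i + 1) - (if i = 0 then 0 else vn j a (i - 1)) + a ⟨i, h⟩ = 0 := by
  obtain ⟨m, hm⟩ := hodd
  rcases Nat.eq_zero_or_pos i with hi0 | hip
  · subst hi0
    have h1 : vn j a 1 = -(a ⟨0, h⟩) := by
      rw [vn, if_neg (by omega), if_pos (by omega : 1 % 2 = 1), Finset.sum_range_one,
        fodd, if_pos (by omega : 0 % 2 = 0), bco_eq j a 0 h (by omega)]
    rw [h1, if_pos rfl]; ring
  rcases Nat.even_or_odd i with hie | hio
  · -- i even, so 2 ≤ i and i ≤ j - 3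
    obtain ⟨p, hp⟩ := hie
    have h2i : 2 ≤ i := by omega
    have hi3 : i + 2 < j := by omega
    have e1 : vn j a (i + 1) = -(∑ t ∈ Finset.range (i + 1), fodd j a t) := by
      rw [vn, if_neg (by omega), if_pos (by omega : (i + 1) % 2 = 1)]
    have e2 : vn j a (i - 1) = -(∑ t ∈ Finset.range (i - 1), fodd j a t) := by
      rw [vn, if_neg (by omega), if_pos (by omega : (i - 1) % 2 = 1)]
    have hsum : ∑ t ∈ Finset.range (i + 1), fodd j a t
        = (∑ t ∈ Finset.range (i - 1), fodd j a t) + fodd j a (i - 1) + fodd j a i := by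
      have h' : i + 1 = (i - 1) + 1 + 1 := by omega
      rw [h', Finset.sum_range_succ, Finset.sum_range_succ]
      congr 2
      all_goals omega
    have hfo1 : fodd j a (i - 1) = 0 := by rw [fodd, if_neg (by omega)]
    have hfo2 : fodd j a i = a ⟨i, h⟩ := by
      rw [fodd, if_pos (by omega : i % 2 = 0), bco_eq j a i h (by omega)]
    rw [e1, e2, hsum, hfo1, hfo2, if_neg (by omega)]
    ring
  · -- i odd
    obtain ⟨p, hp⟩ := hio
    rcases eq_or_lt_of_le (show i + 1 ≤ j - 1 by omega) with hend | hmid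
    · -- i = j - 2
      have hieq : i = j - 2 := by omega
      have e1 : vn j a (i + 1) = 1 := by rw [(by omega : i + 1 = j - 1)]; exact vn_last j a
      have e2 : vn j a (i - 1) = a ⟨i, h⟩ + 1 := by
        rw [vn, if_neg (by omega), if_neg (by omega),
          show i - 1 + 1 = i by omega, show j - 1 = i + 1 by omega,
          Finset.sum_Ico_eq_sum_range, show i + 1 - i = 1 by omega, Finset.sum_range_one,
          add_zero, feven, if_pos (by omega : i % 2 = 1), bco, dif_pos h, if_pos (by omega)]
      rw [e1, e2, if_neg (by omega)]
      ring
    · -- i + 1 < j - 1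
      have e1 : vn j a (i + 1) = ∑ t ∈ Finset.Ico (i + 2) (j - 1), feven j a t := by
        rw [vn, if_neg (by omega), if_neg (by omega)]
      have e2 : vn j a (i - 1) = ∑ t ∈ Finset.Ico i (j - 1), feven j a t := by
        rw [vn, if_neg (by omega), if_neg (by omega), show i - 1 + 1 = i by omega]
      have hsplit : ∑ t ∈ Finset.Ico i (j - 1), feven j a t
          = (∑ t ∈ Finset.Ico i (i + 2), feven j a t)
            + ∑ t ∈ Finset.Ico (i + 2) (j - 1), feven j a t :=
        (Finset.sum_Ico_consecutive _ (by omega) (by omega)).symm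
      have hpair : ∑ t ∈ Finset.Ico i (i + 2), feven j a t = a ⟨i, h⟩ := by
        rw [Finset.sum_Ico_eq_sum_range, show i + 2 - i = 2 by omega,
          Finset.sum_range_succ, Finset.sum_range_one]
        have f1 : feven j a (i + 0) = a ⟨i, h⟩ := by
          rw [add_zero, feven, if_pos (by omega : i % 2 = 1), bco_eq j a i h (by omega)]
        have f2 : feven j a (i + 1) = 0 := by rw [feven, if_neg (by omega)]
        rw [f1, f2, add_zero]
      rw [e1, e2, hsplit, hpair, if_neg (by omega)]
      ring

private def extv (j : ℕ) (w : Fin j → F) (k : ℕ) : F := if h : k < j then w ⟨k, h⟩ else 0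

private lemma row_eq (j : ℕ) (a : Fin j → F) (hj3 : 3 ≤ j) (w : Fin j → F) (i : Fin j)
    (hi : (i : ℕ) < j - 1) :
    ((companion j a - (companion j a)ᵀ).mulVec w) i =
      extv j w ((i : ℕ) + 1) - (if (i : ℕ) = 0 then 0 else extv j w ((i : ℕ) - 1))
        + a i * extv j w (j - 1) := by
  have hlast : (j - 1 : ℕ) < j := by omega
  have hi1 : (i : ℕ) + 1 < j := by omega
  have key : ∀ k : Fin j,
      ((companion j a - (companion j a)ᵀ) i k) * w k =
        (if k = (⟨(i : ℕ) + 1, hi1⟩ : Fin j) then w k else 0)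
        - (if (i : ℕ) = 0 then 0 else
            if k = (⟨(i : ℕ) - 1, by omega⟩ : Fin j) then w k else 0)
        + (if k = (⟨j - 1, hlast⟩ : Fin j) then a i * w k else 0) := by
    intro k
    simp only [Matrix.sub_apply, Matrix.transpose_apply, companion, Matrix.of_apply,
      Fin.ext_iff, Fin.val_mk]
    rw [if_neg (by omega : ¬ (i : ℕ) = j - 1)]
    split_ifs
    all_goals (try ring)
    all_goals (exfalso; omega)
  rw [Matrix.mulVec, dotProduct]
  simp only [key]
  rw [Finset.sum_add_distrib, Finset.sum_sub_distrib, Finset.sum_ite_eq' _ _ (fun k => w k),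
    Finset.sum_ite_eq' _ _ (fun k => a i * w k)]
  simp only [Finset.mem_univ, if_true]
  have eex : ∀ (k : ℕ) (hk : k < j), extv j w k = w ⟨k, hk⟩ := fun k hk => dif_pos hk
  rw [eex _ hi1, eex _ hlast]
  split_ifs with h0
  · simp
  · rw [Finset.sum_ite_eq' _ _ (fun k => w k)]
    simp only [Finset.mem_univ, if_true]
    rw [eex _ (by omega)]

private lemma alt_quad {n : ℕ} (M : Matrix (Fin n) (Fin n) F)
    (hskew : ∀ i k, M i k + M k i = 0) (hdiag : ∀ i, M i i = 0) (v : Fin n → F) :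
    ∑ i, v i * (M.mulVec v) i = 0 := by
  simp only [Matrix.mulVec, dotProduct, Finset.mul_sum]
  rw [← Finset.sum_product']
  refine Finset.sum_ninvolution (fun p => (p.2, p.1)) ?_ ?_ (by simp) (by simp)
  · rintro ⟨i, k⟩
    simp only
    linear_combination v i * v k * hskew i k
  · rintro ⟨i, k⟩ hf
    simp only [ne_eq, Prod.mk.injEq, not_and]
    intro h1
    exfalso
    apply hf
    subst h1
    rw [hdiag]
    ring

private lemma chain_odd (j : ℕ) (hj3 : 3 ≤ j) (u : ℕ → F)
    (hrec : ∀ i, i < j - 1 → u (i + 1) = if i = 0 then 0 else u (i - 1)) :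
    ∀ k, k % 2 = 1 → k < j → u k = 0 := by
  intro k
  induction k using Nat.strong_induction_on with
  | _ k ih =>
    intro hk hkj
    rcases eq_or_lt_of_le (show 1 ≤ k by omega) with h1 | h3
    · rw [← h1]
      have := hrec 0 (by omega)
      simpa using this
    · have hk3 : 3 ≤ k := by omega
      have := hrec (k - 1) (by omega)
      rw [show k - 1 + 1 = k by omega, if_neg (by omega)] at this
      rw [this, show k - 1 - 1 = k - 2 by omega]
      exact ih (k - 2) (by omega) (by omega) (by omega)

private lemma chain_even (j : ℕ) (hj3 : 3 ≤ j) (u : ℕ → F)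
    (hrec : ∀ i, i < j - 1 → u (i + 1) = if i = 0 then 0 else u (i - 1))
    (hlast : u (j - 1) = 0) :
    ∀ m, 2 * m ≤ j - 1 → u (j - 1 - 2 * m) = 0 := by
  intro m
  induction m with
  | zero => simpa using hlast
  | succ m ih =>
    intro hm
    have := hrec (j - 2 - 2 * m) (by omega)
    rw [show j - 2 - 2 * m + 1 = j - 1 - 2 * m by omega, if_neg (by omega),
      show j - 2 - 2 * m - 1 = j - 1 - 2 * (m + 1) by omega] at this
    rw [← this]
    exact ih (by omega)

end aux

/-- For odd `j ≥ 2`, the companion matrix `L_j` of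
`X^j + a_{j-1}X^{j-1} + ⋯ + a_0` satisfies `rank (L_j - L_jᵀ) = j - 1`. -/
theorem stmt_7 {F : Type*} [Field F] [Fintype F] {j : ℕ} (hj : 2 ≤ j) (hodd : Odd j)
    (a : Fin j → F) :
    (companion j a - (companion j a)ᵀ).rank = j - 1 := by
  classical
  have hj3 : 3 ≤ j := by
    obtain ⟨m, hm⟩ := hodd
    omega
  set M := companion j a - (companion j a)ᵀ with hM
  have hskew : ∀ i k, M i k + M k i = 0 := by
    intro i k
    simp only [hM, Matrix.sub_apply, Matrix.transpose_apply]
    ring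
  have hdiag : ∀ i, M i i = 0 := by
    intro i
    simp [hM]
  set v : Fin j → F := fun k => vn j a (k : ℕ) with hv
  have hlastlt : (j - 1 : ℕ) < j := by omega
  have hvlast : v ⟨j - 1, hlastlt⟩ = 1 := by
    show vn j a ((⟨j - 1, hlastlt⟩ : Fin j) : ℕ) = 1
    simpa using vn_last j a
  have hextv : ∀ (k : ℕ) (hk : k < j), extv j v k = vn j a k := by
    intro k hk
    rw [extv, dif_pos hk]
  have hrows : ∀ i : Fin j, (i : ℕ) < j - 1 → (M.mulVec v) i = 0 := by
    intro i hi
    rw [hM, row_eq j a hj3 v i hi, hextv _ (by omega), hextv _ hlastlt, vn_last, mul_one]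
    have hife : (if (i : ℕ) = 0 then (0 : F) else extv j v ((i : ℕ) - 1))
        = (if (i : ℕ) = 0 then 0 else vn j a ((i : ℕ) - 1)) := by
      split_ifs with h0
      · rfl
      · exact hextv _ (by omega)
    rw [hife]
    have h := vn_rec j a hj3 hodd (i : ℕ) hi i.isLt
    simpa using h
  have hq := alt_quad M hskew hdiag v
  have hsingle : ∑ i, v i * (M.mulVec v) i
      = v ⟨j - 1, hlastlt⟩ * (M.mulVec v) ⟨j - 1, hlastlt⟩ := by
    refine Finset.sum_eq_single _ (fun b _ hb => ?_) (fun h => absurd (Finset.mem_univ _) h)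
    have hb' : (b : ℕ) < j - 1 := by
      have h1 := b.isLt
      by_contra hcon
      exact hb (Fin.ext (by simpa using by omega))
    rw [hrows b hb', mul_zero]
  have hlastrow : (M.mulVec v) ⟨j - 1, hlastlt⟩ = 0 := by
    rw [hsingle, hvlast, one_mul] at hq
    exact hq
  have hMv : M.mulVec v = 0 := by
    funext i
    simp only [Pi.zero_apply]
    rcases Nat.lt_or_ge (i : ℕ) (j - 1) with h | h
    · exact hrows i h
    · have hieq : i = ⟨j - 1, hlastlt⟩ := Fin.ext (by simpa using by omega)
      rw [hieq]
      exact hlastrow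
  have hv0 : v ≠ 0 := by
    intro h
    have := congrFun h ⟨j - 1, hlastlt⟩
    rw [hvlast] at this
    simpa using this
  have hker : LinearMap.ker M.mulVecLin = Submodule.span F {v} := by
    apply le_antisymm
    · intro w hw
      rw [LinearMap.mem_ker, Matrix.mulVecLin_apply] at hw
      set c := extv j w (j - 1) with hc
      set u : ℕ → F := fun k => extv j w k - c * vn j a k with hu
      have hurec : ∀ i, i < j - 1 → u (i + 1) = if i = 0 then 0 else u (i - 1) := by
        intro i hi
        have hwrow := row_eq j a hj3 w ⟨i, by omega⟩ (by simpa using hi)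
        rw [← hM, hw] at hwrow
        simp only [Pi.zero_apply, Fin.val_mk] at hwrow
        have hvrec := vn_rec j a hj3 hodd i hi (by omega)
        simp only [hu]
        split_ifs at hwrow hvrec ⊢ with h0
        · linear_combination -hwrow - c * hvrec
        · linear_combination -hwrow - c * hvrec
      have hu1 : u (j - 1) = 0 := by
        simp only [hu, vn_last, mul_one, hc, sub_self]
      have hoddz := chain_odd j hj3 u hurec
      have hevenz := chain_even j hj3 u hurec hu1
      refine Submodule.mem_span_singleton.mpr ⟨c, ?_⟩
      funext k
      have hk := k.isLt
      obtain ⟨mm, hmm⟩ := hodd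
      have hz : u (k : ℕ) = 0 := by
        rcases Nat.even_or_odd (k : ℕ) with he | ho
        · obtain ⟨p, hp⟩ := he
          have h2 : (k : ℕ) = j - 1 - 2 * ((j - 1 - (k : ℕ)) / 2) := by omega
          rw [h2]
          exact hevenz _ (by omega)
        · exact hoddz _ (Nat.odd_iff.mp ho) hk
      have hex : extv j w (k : ℕ) = w k := by
        rw [extv, dif_pos hk]
      simp only [hu, hex] at hz
      have hcv : (c • v) k = c * vn j a (k : ℕ) := rfl
      rw [hcv]
      linear_combination -hz
    · rw [Submodule.span_singleton_le_iff_mem]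
      exact LinearMap.mem_ker.mpr (by rw [Matrix.mulVecLin_apply]; exact hMv)
  have hrn := LinearMap.finrank_range_add_finrank_ker M.mulVecLin
  rw [hker, finrank_span_singleton hv0] at hrn
  have hdim : Module.finrank F (Fin j → F) = j := by simp
  rw [hdim] at hrn
  have hr : M.rank = Module.finrank F (LinearMap.range M.mulVecLin) := rfl
  omega
end

section
/- Let F_q be a finite field and let t ≥ 2 be an integer. Assume that either the characteristic of F_q is odd, or the characteristic of F_q is 2 and t > 2. Then there exists a nonzero element ξ₁ ∈ F_q such that the polynomial X^t − X^{t−2} − ξ₁ has no root in F_q, i.e., x^t − x^{t−2} ≠ ξ₁ for every x ∈ F_q. -/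
/-- For a finite field `F` and `t ≥ 2`, with either odd characteristic,
or characteristic 2 and `t > 2`, there exists a nonzero `ξ₁ ∈ F` such that
`X^t - X^(t-2) - ξ₁` has no root in `F`. -/
theorem stmt_11 {F : Type*} [Field F] [Fintype F] {t : ℕ} (ht : 2 ≤ t)
    (h : Odd (ringChar F) ∨ (ringChar F = 2 ∧ 2 < t)) :
    ∃ ξ₁ : F, ξ₁ ≠ 0 ∧ ∀ x : F, x ^ t - x ^ (t - 2) ≠ ξ₁ := by
  set f : F → F := fun x => x ^ t - x ^ (t - 2) with hf
  have hf1 : f 1 = 0 := by simp [hf]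
  have hni : ¬ Function.Injective f := by
    rcases h with hodd | ⟨h2, ht2⟩
    · intro hinj
      have hne : (-1 : F) ≠ 1 :=
        Ring.neg_one_ne_one_of_char_ne_two (fun h2 => by rw [h2] at hodd; exact (Nat.odd_iff.mp hodd).symm.trans_ne (by norm_num) rfl)
      apply hne
      apply hinj
      have : (-1 : F) ^ t = (-1 : F) ^ (t - 2) := by
        conv_lhs => rw [show t = (t - 2) + 2 by omega, pow_add]
        ring
      simp [hf, this, hf1]
    · intro hinj
      have h0 : f 0 = 0 := by
        simp [hf, zero_pow (by omega : t ≠ 0), zero_pow (by omega : t - 2 ≠ 0)]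
      exact zero_ne_one (hinj (h0.trans hf1.symm))
  have hns : ¬ Function.Surjective f := fun hs =>
    hni (Finite.injective_iff_surjective.mpr hs)
  simp only [Function.Surjective, not_forall] at hns
  push_neg at hns
  obtain ⟨ξ, hξ⟩ := hns
  refine ⟨ξ, ?_, fun x => hξ x⟩
  rintro rfl
  exact hξ 1 hf1
end

section
/- Let p be a prime and let s, m be positive integers such that s divides m and s ≠ m. Set n = p^m − 1. Then for every integer b with 0 < b < B(p,m,s), the cyclotomic cosets I_b and I_{n−b} are disjoint; that is, b·p^{sℓ} mod n ≠ (n−b)·p^{sℓ'} mod n for all nonnegative integers ℓ, ℓ'. -/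
lemma modeq_sub_one' {n x y : ℕ} (hx : 1 ≤ x) (hy : 1 ≤ y) (h : x ≡ y [MOD n]) :
    x - 1 ≡ y - 1 [MOD n] := by
  rcases le_total x y with hle | hle
  · have hd := (Nat.modEq_iff_dvd' hle).mp h
    have he : y - x = (y - 1) - (x - 1) := by omega
    exact (Nat.modEq_iff_dvd' (by omega)).mpr (he ▸ hd)
  · have hd := (Nat.modEq_iff_dvd' hle).mp h.symm
    have he : x - y = (x - 1) - (y - 1) := by omega
    exact ((Nat.modEq_iff_dvd' (by omega)).mpr (he ▸ hd)).symm

lemma gcd_pow_sub_one' (q : ℕ) (hq : 1 ≤ q) : ∀ a b : ℕ,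
    Nat.gcd (q ^ a - 1) (q ^ b - 1) = q ^ (Nat.gcd a b) - 1 := by
  intro a
  induction a using Nat.strong_induction_on with
  | _ a ih =>
    intro b
    match a with
    | 0 => simp
    | Nat.succ a' =>
      set a := a' + 1
      have ha : 0 < a := Nat.succ_pos a'
      -- q^b ≡ q^(b % a) mod (q^a - 1)
      have h1 : q ^ a ≡ 1 [MOD q ^ a - 1] := by
        have : 1 ≤ q ^ a := Nat.one_le_pow _ _ (by omega)
        exact ((Nat.modEq_iff_dvd' this).mpr dvd_rfl).symm
      have h2 : q ^ b ≡ q ^ (b % a) [MOD q ^ a - 1] := by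
        conv_lhs => rw [show b = a * (b / a) + b % a from (Nat.div_add_mod b a).symm ▸ rfl]
        calc q ^ (a * (b / a) + b % a) = (q ^ a) ^ (b / a) * q ^ (b % a) := by
              rw [pow_add, pow_mul]
          _ ≡ 1 ^ (b / a) * q ^ (b % a) [MOD q ^ a - 1] := (h1.pow _).mul_right _
          _ = q ^ (b % a) := by rw [one_pow, one_mul]
      have h3 : q ^ b - 1 ≡ q ^ (b % a) - 1 [MOD q ^ a - 1] :=
        modeq_sub_one' (Nat.one_le_pow _ _ (by omega)) (Nat.one_le_pow _ _ (by omega)) h2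
      have h4 : (q ^ b - 1) % (q ^ a - 1) = (q ^ (b % a) - 1) % (q ^ a - 1) := h3
      rw [Nat.gcd_rec (q ^ a - 1) (q ^ b - 1), h4, ← Nat.gcd_rec, Nat.gcd_comm,
        ih (b % a) (Nat.mod_lt _ ha) a, Nat.gcd_rec a b]

lemma dvd_div_gcd_of_dvd_mul' {n b c : ℕ} (hn : 0 < n) (h : n ∣ b * c) :
    n / Nat.gcd n c ∣ b := by
  set d := Nat.gcd n c with hd
  have hdpos : 0 < d := Nat.gcd_pos_of_pos_left _ hn
  have h1 : d ∣ n := Nat.gcd_dvd_left _ _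
  have h2 : d ∣ c := Nat.gcd_dvd_right _ _
  have hco : Nat.Coprime (n / d) (c / d) := Nat.coprime_div_gcd_div_gcd hdpos
  apply hco.dvd_of_dvd_mul_right
  have key : n / d * d ∣ b * (c / d) * d := by
    rw [Nat.div_mul_cancel h1, mul_assoc, Nat.div_mul_cancel h2]; exact h
  exact (Nat.mul_dvd_mul_iff_right hdpos).mp key

lemma twoB_le' (q t : ℕ) (hq : 2 ≤ q) (ht : 2 ≤ t) :
    2 * (if Even t then q ^ (t / 2) - 1 else q ^ ((t + 1) / 2) - q + 1) ≤ q ^ t := by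
  split_ifs with he
  · have h1 : 2 ≤ q ^ (t / 2) :=
      le_trans hq (by calc q = q ^ 1 := (pow_one q).symm
        _ ≤ q ^ (t / 2) := Nat.pow_le_pow_right (by omega) (by omega))
    have h2 : q ^ (t / 2) * q ^ (t / 2) ≤ q ^ t := by
      rw [← pow_add]; exact Nat.pow_le_pow_right (by omega) (by omega)
    have h3 : 2 * q ^ (t / 2) ≤ q ^ (t / 2) * q ^ (t / 2) := Nat.mul_le_mul_right _ h1
    omega
  · have ht2 : t % 2 = 1 := Nat.not_even_iff.mp he
    have ht3 : 3 ≤ t := by omega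
    have hQ : 2 ≤ q ^ ((t + 1) / 2) :=
      le_trans hq (by calc q = q ^ 1 := (pow_one q).symm
        _ ≤ q ^ ((t + 1) / 2) := Nat.pow_le_pow_right (by omega) (by omega))
    have h2 : q * q ^ ((t + 1) / 2) ≤ q ^ t := by
      calc q * q ^ ((t + 1) / 2) = q ^ (1 + (t + 1) / 2) := by rw [pow_add, pow_one]
        _ ≤ q ^ t := Nat.pow_le_pow_right (by omega) (by omega)
    have h3 : 2 * q ^ ((t + 1) / 2) ≤ q * q ^ ((t + 1) / 2) := Nat.mul_le_mul_right _ hq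
    omega

lemma core' (q t b k : ℕ) (hq : 2 ≤ q) (ht : 2 ≤ t) (hk : k < t) (hb : 0 < b)
    (hbB : b < (if Even t then q ^ (t / 2) - 1 else q ^ ((t + 1) / 2) - q + 1))
    (hdvd : (q ^ t - 1) ∣ b * (q ^ k + 1)) : False := by
  set B' := (if Even t then q ^ (t / 2) - 1 else q ^ ((t + 1) / 2) - q + 1) with hB'
  have hqt : 4 ≤ q ^ t := by
    calc 4 = 2 ^ 2 := rfl
      _ ≤ q ^ 2 := Nat.pow_le_pow_left hq 2
      _ ≤ q ^ t := Nat.pow_le_pow_right (by omega) ht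
  have h2B : 2 * B' ≤ q ^ t := twoB_le' q t hq ht
  rcases Nat.eq_zero_or_pos k with hk0 | hk1
  · -- k = 0: q^t - 1 ∣ 2b with 0 < 2b < q^t - 1
    subst hk0
    have : b * (q ^ 0 + 1) = 2 * b := by ring
    rw [this] at hdvd
    have hle := Nat.le_of_dvd (by omega) hdvd
    omega
  · by_cases h2k : 2 * k = t
    · -- k = t/2
      have hkq : 2 ≤ q ^ k :=
        le_trans hq (by calc q = q ^ 1 := (pow_one q).symm
          _ ≤ q ^ k := Nat.pow_le_pow_right (by omega) hk1)
    
      have hfac : q ^ t - 1 = (q ^ k + 1) * (q ^ k - 1) := by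
        have h1 : q ^ t = q ^ k * q ^ k := by rw [← pow_add]; congr 1; omega
        have h2 : (q ^ k + 1) * (q ^ k - 1) + 1 = q ^ k * q ^ k := by
          obtain ⟨c, hc⟩ : ∃ c, q ^ k = c + 1 := ⟨q ^ k - 1, by omega⟩
          rw [hc, Nat.add_sub_cancel]; ring
        omega
      rw [hfac, mul_comm b _] at hdvd
      have hdb : q ^ k - 1 ∣ b := (Nat.mul_dvd_mul_iff_left (by omega : 0 < q ^ k + 1)).mp hdvd
      have hble := Nat.le_of_dvd hb hdb
      have hev : Even t := ⟨k, by omega⟩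
      rw [hB', if_pos hev] at hbB
      rw [show t / 2 = k by omega] at hbB
      omega
    · -- general case via gcd
      have hdvd2 : (q ^ t - 1) ∣ b * (q ^ (2 * k) - 1) := by
        refine hdvd.trans (mul_dvd_mul_left b ⟨q ^ k - 1, ?_⟩)
        have h1 : q ^ (2 * k) = q ^ k * q ^ k := by rw [← pow_add]; congr 1; omega
        have hkq : 1 ≤ q ^ k := Nat.one_le_pow _ _ (by omega)
        have h2 : (q ^ k + 1) * (q ^ k - 1) + 1 = q ^ k * q ^ k := by
          obtain ⟨c, hc⟩ : ∃ c, q ^ k = c + 1 := ⟨q ^ k - 1, by omega⟩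
          rw [hc, Nat.add_sub_cancel]; ring
        omega
      set g := Nat.gcd t (2 * k) with hg
      have hgt : g ∣ t := Nat.gcd_dvd_left _ _
      have hgpos : 0 < g := Nat.gcd_pos_of_pos_left _ (by omega)
      have hgne : g ≠ t := by
        intro h
        obtain ⟨w, hw⟩ : t ∣ 2 * k := h ▸ Nat.gcd_dvd_right t (2 * k)
        have hw2 : w < 2 := by
          have h' : t * w < t * 2 := by
            calc t * w = 2 * k := hw.symm
              _ < 2 * t := by omega
              _ = t * 2 := by ring
          exact Nat.lt_of_mul_lt_mul_left h'
        interval_cases w <;> omega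
      have hgcd : Nat.gcd (q ^ t - 1) (q ^ (2 * k) - 1) = q ^ g - 1 :=
        gcd_pow_sub_one' q (by omega) t (2 * k)
      have hdvdb : (q ^ t - 1) / (q ^ g - 1) ∣ b := by
        have := dvd_div_gcd_of_dvd_mul' (by omega : 0 < q ^ t - 1) hdvd2
        rwa [hgcd] at this
      have hble := Nat.le_of_dvd hb hdvdb
      -- q^(t-g) ≤ (q^t-1)/(q^g-1)
      have hglt : g < t := lt_of_le_of_ne (Nat.le_of_dvd (by omega) hgt) hgne
      have hgq : 2 ≤ q ^ g :=
        le_trans hq (by calc q = q ^ 1 := (pow_one q).symm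
          _ ≤ q ^ g := Nat.pow_le_pow_right (by omega) hgpos)
      have hyx : q ^ (t - g) * q ^ g = q ^ t := by rw [← pow_add]; congr 1; omega
      have hy1 : 1 ≤ q ^ (t - g) := Nat.one_le_pow _ _ (by omega)
      have hlediv : q ^ (t - g) ≤ (q ^ t - 1) / (q ^ g - 1) := by
        rw [Nat.le_div_iff_mul_le (by omega : 0 < q ^ g - 1)]
        have h5 : q ^ (t - g) * (q ^ g - 1) + q ^ (t - g) = q ^ (t - g) * q ^ g := by
          obtain ⟨c, hc⟩ : ∃ c, q ^ g = c + 1 := ⟨q ^ g - 1, by omega⟩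
          rw [hc, Nat.add_sub_cancel]; ring
        omega
      have hbig : q ^ (t - g) ≤ b := le_trans hlediv hble
      -- now B' ≤ q^(t-g)
      obtain ⟨u, hu⟩ := hgt
      have hu2 : 2 ≤ u := by
        rcases Nat.lt_or_ge u 2 with h | h
        · interval_cases u <;> omega
        · exact h
      have h2g : 2 * g ≤ t := by
        have : g * 2 ≤ g * u := Nat.mul_le_mul_left _ hu2
        omega
      rcases Nat.even_or_odd t with hev | hod
      · rw [hB', if_pos hev] at hbB
        obtain ⟨v, hv⟩ := hev
        have hle2 : q ^ (t / 2) ≤ q ^ (t - g) := Nat.pow_le_pow_right (by omega) (by omega)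
        omega
      · rw [hB', if_neg (Nat.not_even_iff_odd.mpr hod)] at hbB
        have ht2 : t % 2 = 1 := Nat.odd_iff.mp hod
        have hu3 : 3 ≤ u := by
          rcases Nat.even_or_odd u with hue | huo
          · exfalso
            have : Even t := hu ▸ hue.mul_left g
            exact (Nat.not_even_iff_odd.mpr hod) this
          · have := Nat.odd_iff.mp huo; omega
        have h3g : 3 * g ≤ t := by
          have : g * 3 ≤ g * u := Nat.mul_le_mul_left _ hu3
          omega
        have hle2 : q ^ ((t + 1) / 2) ≤ q ^ (t - g) :=
          Nat.pow_le_pow_right (by omega) (by omega)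
        have hQq : q ≤ q ^ ((t + 1) / 2) := by
          calc q = q ^ 1 := (pow_one q).symm
            _ ≤ q ^ ((t + 1) / 2) := Nat.pow_le_pow_right (by omega) (by omega)
        omega

/-- The bound `B(p,m,s)` from the paper: `(p^s)^(m/(2s)) - 1` if `m/s` is even, and
`(p^s)^⌈m/(2s)⌉ - p^s + 1` otherwise. -/
def Bval (p m s : ℕ) : ℕ :=
  if Even (m / s) then (p ^ s) ^ (m / (2 * s)) - 1
  else (p ^ s) ^ ((m + 2 * s - 1) / (2 * s)) - p ^ s + 1

/-- For `0 < b < B(p,m,s)` the cyclotomic cosets `I_b` and `I_{n-b}`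
(with respect to `n = p^m - 1` and `s`) are disjoint. -/
theorem stmt_15 (p s m : ℕ) (hp : p.Prime) (hs : 0 < s) (hm : 0 < m)
    (hsm : s ∣ m) (hne : s ≠ m) (b : ℕ) (hb : 0 < b) (hbB : b < Bval p m s) :
    ∀ ℓ ℓ' : ℕ,
      b * p ^ (s * ℓ) % (p ^ m - 1) ≠ ((p ^ m - 1) - b) * p ^ (s * ℓ') % (p ^ m - 1) := by
  intro ℓ ℓ' h
  obtain ⟨t, hmt⟩ := hsm
  have hp2 : 2 ≤ p := hp.two_le
  set q := p ^ s with hqdef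
  have hq : 2 ≤ q := by
    calc 2 = 2 ^ 1 := rfl
      _ ≤ p ^ 1 := Nat.pow_le_pow_left hp2 1
      _ ≤ p ^ s := Nat.pow_le_pow_right (by omega) hs
  have ht : 2 ≤ t := by
    rcases Nat.lt_or_ge t 2 with h' | h'
    · interval_cases t <;> omega
    · exact h'
  set n := p ^ m - 1 with hndef
  have hqt : q ^ t = p ^ m := by rw [hqdef, ← pow_mul, ← hmt]
  have hqt4 : 4 ≤ q ^ t := by
    calc 4 = 2 ^ 2 := rfl
      _ ≤ q ^ 2 := Nat.pow_le_pow_left hq 2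
      _ ≤ q ^ t := Nat.pow_le_pow_right (by omega) ht
  have hn1 : n + 1 = q ^ t := by rw [hndef, hqt]; omega
  -- rewrite Bval
  have hts : m / s = t := by rw [hmt, Nat.mul_div_cancel_left _ hs]
  have hBeq : Bval p m s = (if Even t then q ^ (t / 2) - 1 else q ^ ((t + 1) / 2) - q + 1) := by
    rw [Bval, hts]
    rcases Nat.even_or_odd t with hev | hod
    · rw [if_pos hev, if_pos hev]
      congr 2
      rw [hmt, show 2 * s = s * 2 by ring, Nat.mul_div_mul_left _ _ hs]
    · rw [if_neg (Nat.not_even_iff_odd.mpr hod), if_neg (Nat.not_even_iff_odd.mpr hod)]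
      congr 3
      obtain ⟨u, hu⟩ := hod
      have h1 : m + 2 * s - 1 = 2 * s * (u + 1) + (s - 1) := by
        rw [hmt, hu]; ring_nf; omega
      rw [h1, Nat.mul_add_div (by omega), Nat.div_eq_of_lt (by omega)]
      omega
  rw [hBeq] at hbB
  have h2B := twoB_le' q t hq ht
  have hbn : b ≤ n := by omega
  -- from h get n ∣ b*p^(sℓ) + b*p^(sℓ')
  have hmeq : b * p ^ (s * ℓ) + b * p ^ (s * ℓ') ≡ 0 [MOD n] := by
    calc b * p ^ (s * ℓ) + b * p ^ (s * ℓ')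
        ≡ (n - b) * p ^ (s * ℓ') + b * p ^ (s * ℓ') [MOD n] := Nat.ModEq.add_right _ h
      _ = n * p ^ (s * ℓ') := by rw [← add_mul]; congr 1; omega
      _ ≡ 0 * p ^ (s * ℓ') [MOD n] := (Nat.modEq_zero_iff_dvd.mpr dvd_rfl).mul_right _
      _ = 0 := by rw [zero_mul]
  have hdvd0 : n ∣ b * p ^ (s * ℓ) + b * p ^ (s * ℓ') :=
    (Nat.modEq_zero_iff_dvd).mp hmeq
  -- coprimality of p and n
  have hcop : Nat.Coprime n p := by
    have h1 : Nat.Coprime (p ^ m) n := by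
      rw [show p ^ m = n + 1 by omega]
      simp [Nat.coprime_self_add_left]
    exact (h1.coprime_dvd_left (dvd_pow_self p hm.ne')).symm
  -- key: for all d, ¬ n ∣ b * (q^d + 1)
  have key : ∀ d : ℕ, ¬ n ∣ b * (q ^ d + 1) := by
    intro d hd
    have h1 : q ^ t ≡ 1 [MOD n] := by
      rw [← hn1]; exact ((Nat.modEq_iff_dvd' (by omega)).mpr (by simp)).symm
    have h2 : q ^ d ≡ q ^ (d % t) [MOD n] := by
      conv_lhs => rw [show d = t * (d / t) + d % t from (Nat.div_add_mod d t).symm ▸ rfl]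
      calc q ^ (t * (d / t) + d % t) = (q ^ t) ^ (d / t) * q ^ (d % t) := by
            rw [pow_add, pow_mul]
        _ ≡ 1 ^ (d / t) * q ^ (d % t) [MOD n] := (h1.pow _).mul_right _
        _ = q ^ (d % t) := by rw [one_pow, one_mul]
    have h3 : b * (q ^ d + 1) ≡ b * (q ^ (d % t) + 1) [MOD n] := (h2.add_right 1).mul_left b
    have hd' : n ∣ b * (q ^ (d % t) + 1) :=
      Nat.modEq_zero_iff_dvd.mp (h3.symm.trans (Nat.modEq_zero_iff_dvd.mpr hd))
    have hnq : q ^ t - 1 = n := by omega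
    exact core' q t b (d % t) hq ht (Nat.mod_lt _ (by omega)) hb hbB (hnq ▸ hd')
  -- split on ℓ ≤ ℓ'
  rcases le_total ℓ ℓ' with hle | hle
  · obtain ⟨e, he⟩ := Nat.exists_eq_add_of_le hle
    apply key e
    have heq : b * p ^ (s * ℓ) + b * p ^ (s * ℓ') = p ^ (s * ℓ) * (b * (q ^ e + 1)) := by
      rw [he, hqdef, ← pow_mul, Nat.mul_add, pow_add]; ring
    rw [heq] at hdvd0
    exact (hcop.pow_right _).dvd_of_dvd_mul_left hdvd0
  · obtain ⟨e, he⟩ := Nat.exists_eq_add_of_le hle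
    apply key e
    have heq : b * p ^ (s * ℓ) + b * p ^ (s * ℓ') = p ^ (s * ℓ') * (b * (q ^ e + 1)) := by
      rw [he, hqdef, ← pow_mul, Nat.mul_add, pow_add]; ring
    rw [heq] at hdvd0
    exact (hcop.pow_right _).dvd_of_dvd_mul_left hdvd0
end

section
/- Let p be a prime and let s, m be positive integers such that s divides m and s ≠ m. Set n = p^m − 1. Then for every integer b with 0 < b ≤ B(p,m,s), the cyclotomic coset I_b has exactly m/s elements; that is, the set { b·p^{sℓ} mod n : ℓ ≥ 0 } has cardinality m/s. -/
private lemma dvd_sub_pow_mul {n b q : ℤ} {x : ℕ} (hx : n ∣ b * q ^ x - b) (k : ℕ) :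
    n ∣ b * q ^ (x * k) - b := by
  induction k with
  | zero => simp
  | succ k ih =>
    have h : b * q ^ (x * (k + 1)) - b
        = q ^ (x * k) * (b * q ^ x - b) + (b * q ^ (x * k) - b) := by
      rw [Nat.mul_succ, pow_add]; ring
    rw [h]; exact dvd_add (hx.mul_left _) ih

private lemma dvd_sub_pow_gcd {n b q : ℤ} : ∀ x y : ℕ, n ∣ b * q ^ x - b →
    n ∣ b * q ^ y - b → n ∣ b * q ^ (Nat.gcd x y) - b := by
  intro x y
  induction x, y using Nat.gcd.induction with
  | H0 y => intro _ h; simpa using h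
  | H1 x y hx ih =>
    intro h1 h2
    rw [Nat.gcd_rec]
    refine ih ?_ h1
    have hmul := dvd_sub_pow_mul h1 (y / x)
    set r := y % x with hrdef
    set k := y / x with hkdef
    have h0 : x * k + r = y := Nat.div_add_mod y x
    have key : b * q ^ r - b
        = (b * q ^ y - b) - q ^ r * (b * q ^ (x * k) - b) := by
      rw [← h0, pow_add]; ring
    rw [key]; exact dvd_sub h2 (hmul.mul_left _)

set_option maxHeartbeats 2000000 in
/-- For `0 < b ≤ B(p,m,s)`, the cyclotomic coset
`I_b = { b·p^{sℓ} mod (p^m - 1) : ℓ ≥ 0 }` has exactly `m/s` elements. -/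
theorem stmt_16 (p s m : ℕ) (hp : p.Prime) (hs : 0 < s) (hm : 0 < m)
    (hsm : s ∣ m) (hne : s ≠ m) (b : ℕ) (hb : 0 < b) (hbB : b ≤ Bval p m s) :
    Set.ncard { x : ℕ | ∃ ℓ : ℕ, x = b * p ^ (s * ℓ) % (p ^ m - 1) } = m / s := by
  obtain ⟨t, rfl⟩ := hsm
  have hp2 : 2 ≤ p := hp.two_le
  set q : ℕ := p ^ s with hqdef
  have hq2 : 2 ≤ q := by
    calc 2 ≤ p := hp2
    _ ≤ p ^ s := Nat.le_self_pow hs.ne' p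
  have ht2 : 2 ≤ t := by
    rcases Nat.lt_or_ge t 2 with h | h
    · interval_cases t <;> omega
    · exact h
  have hts : s * t / s = t := Nat.mul_div_cancel_left t hs
  set n : ℕ := p ^ (s * t) - 1 with hndef
  have hpow : p ^ (s * t) = q ^ t := by rw [pow_mul]
  have hqt1 : 1 ≤ q ^ t := Nat.one_le_pow _ _ (by omega)
  have hn1 : n + 1 = q ^ t := by rw [hndef, hpow]; omega
  have hnpos : 0 < n := by
    have : 4 ≤ q ^ t := by
      calc (4:ℕ) = 2 ^ 2 := rfl
      _ ≤ q ^ t := Nat.pow_le_pow_left hq2 2 |>.trans (Nat.pow_le_pow_right (by omega) ht2)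
    omega
  -- the function
  set f : ℕ → ℕ := fun ℓ => b * q ^ ℓ % n with hfdef
  have hqtmod : q ^ t ≡ 1 [MOD n] := by
    show q ^ t % n = 1 % n
    rw [← hn1, Nat.add_mod_left]
  have hper : ∀ ℓ, f (ℓ + t) = f ℓ := by
    intro ℓ
    show b * q ^ (ℓ + t) % n = b * q ^ ℓ % n
    have : b * q ^ ℓ * q ^ t ≡ b * q ^ ℓ * 1 [MOD n] := (Nat.ModEq.refl _).mul hqtmod
    simpa [pow_add, mul_assoc, Nat.ModEq] using this
  have hred : ∀ ℓ, f ℓ = f (ℓ % t) := by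
    intro ℓ
    conv_lhs => rw [← Nat.mod_add_div ℓ t]
    generalize ℓ / t = k
    induction k with
    | zero => simp
    | succ k ih => rw [Nat.mul_succ, ← Nat.add_assoc, hper, ih]
  -- coprimality
  have hcop : Nat.Coprime q n := by
    have hdvd : q ∣ n + 1 := by
      rw [hn1]
      exact dvd_pow_self q (by omega)
    have h1 : Nat.Coprime (n + 1) n := by
      show Nat.gcd (n + 1) n = 1
      rw [Nat.gcd_self_add_left]
      exact Nat.gcd_one_left n
    exact Nat.Coprime.coprime_dvd_left hdvd h1
  -- injectivity on range t
  have hinj : ∀ i j, i < t → j < t → i ≤ j → f i = f j → i = j := by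
    intro i j hi hj hij hfij
    by_contra hne'
    have hij' : i < j := lt_of_le_of_ne hij hne'
    set e : ℕ := j - i with hedef
    have he : 0 < e := by omega
    have hmodeq : b * q ^ i ≡ b * q ^ j [MOD n] := by
      show b * q ^ i % n = b * q ^ j % n
      exact hfij
    have hle : b * q ^ i ≤ b * q ^ j :=
      Nat.mul_le_mul_left b (Nat.pow_le_pow_right (by omega) hij)
    have hdvdN : n ∣ b * q ^ j - b * q ^ i := (Nat.modEq_iff_dvd' hle).mp hmodeq
    have hdvdZ : (n : ℤ) ∣ (b : ℤ) * q ^ j - b * q ^ i := by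
      have h := Int.natCast_dvd_natCast.mpr hdvdN
      rw [Nat.cast_sub hle] at h
      push_cast at h
      exact h
    have hfactor : (b : ℤ) * q ^ j - b * q ^ i = (q : ℤ) ^ i * ((b : ℤ) * q ^ e - b) := by
      have : j = i + e := by omega
      rw [this, pow_add]; ring
    have hcopZ : IsCoprime ((q : ℤ) ^ i) (n : ℤ) :=
      (Nat.isCoprime_iff_coprime.mpr hcop).pow_left
    have hdvde : (n : ℤ) ∣ (b : ℤ) * q ^ e - b := by
      rw [hfactor] at hdvdZ
      exact hcopZ.symm.dvd_of_dvd_mul_left hdvdZ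
    have hdvdt : (n : ℤ) ∣ (b : ℤ) * q ^ t - b := by
      have hcast : (n : ℤ) = (q : ℤ) ^ t - 1 := by
        have : (n : ℤ) + 1 = ((q ^ t : ℕ) : ℤ) := by exact_mod_cast congrArg (Nat.cast : ℕ → ℤ) hn1
        push_cast at this
        omega
      rw [hcast]
      exact ⟨b, by ring⟩
    set d : ℕ := Nat.gcd t e with hddef
    have hdvdd : (n : ℤ) ∣ (b : ℤ) * q ^ d - b := dvd_sub_pow_gcd t e hdvdt hdvde
    have hdpos : 0 < d := Nat.gcd_pos_of_pos_right t he
    have hdt : d ∣ t := Nat.gcd_dvd_left t e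
    have hdlt : d < t := lt_of_le_of_lt (Nat.le_of_dvd he (Nat.gcd_dvd_right t e)) (by omega)
    have h2d : 2 * d ≤ t := by
      obtain ⟨c, hc⟩ := hdt
      rcases Nat.lt_or_ge c 2 with h | h
      · interval_cases c <;> omega
      · nlinarith
    -- positivity and size
    have hX2 : (2 : ℤ) ≤ (q : ℤ) ^ d := by
      calc (2 : ℤ) ≤ (q : ℤ) := by exact_mod_cast hq2
      _ ≤ (q : ℤ) ^ d := le_self_pow₀ (by exact_mod_cast (by omega : 1 ≤ q)) hdpos.ne'
    have hbZ : (1 : ℤ) ≤ (b : ℤ) := by exact_mod_cast hb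
    have hposd : 0 < (b : ℤ) * q ^ d - b := by nlinarith
    have hlen : (n : ℤ) ≤ (b : ℤ) * q ^ d - b := Int.le_of_dvd hposd hdvdd
    have hXY : (q : ℤ) ^ d ≤ (q : ℤ) ^ (t - d) :=
      pow_le_pow_right₀ (by exact_mod_cast (by omega : 1 ≤ q)) (by omega)
    have hsplit : (q : ℤ) ^ t = (q : ℤ) ^ (t - d) * (q : ℤ) ^ d := by
      rw [← pow_add]; congr 1; omega
    have hcast : (n : ℤ) = (q : ℤ) ^ t - 1 := by
      have : (n : ℤ) + 1 = ((q ^ t : ℕ) : ℤ) := by exact_mod_cast congrArg (Nat.cast : ℕ → ℤ) hn1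
      push_cast at this
      omega
    -- derive b ≥ q^(t-d) + 1
    have hbig : (q : ℤ) ^ (t - d) + 1 ≤ (b : ℤ) := by
      rw [hcast, hsplit] at hlen
      nlinarith [hlen, hXY, hX2]
    -- compare with Bval
    have hhalf : (t + 1) / 2 ≤ t - d := by omega
    have hbound : (q : ℤ) ^ ((t + 1) / 2) + 1 ≤ (b : ℤ) := by
      calc (q : ℤ) ^ ((t + 1) / 2) + 1
          ≤ (q : ℤ) ^ (t - d) + 1 := by
            have := pow_le_pow_right₀ (by exact_mod_cast (by omega : 1 ≤ q)) hhalf (a := (q : ℤ))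
            omega
      _ ≤ (b : ℤ) := hbig
    have hboundN : q ^ ((t + 1) / 2) + 1 ≤ b := by exact_mod_cast hbound
    -- Bval ≤ q^((t+1)/2)
    have hBle : Bval p (s * t) s ≤ q ^ ((t + 1) / 2) := by
      unfold Bval
      rw [hts]
      split_ifs with hev
      · obtain ⟨u, hu⟩ := hev
        have h1 : s * t / (2 * s) = u := by
          have : s * t = 2 * s * u := by rw [hu]; ring
          rw [this, Nat.mul_div_cancel_left u (by omega)]
        have h2 : (t + 1) / 2 = u := by omega
        rw [h1, h2, ← hqdef]
        omega
      · have hodd : ¬ Even t := hev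
        obtain ⟨u, hu⟩ : ∃ u, t = 2 * u + 1 := by
          rcases Nat.even_or_odd t with h | h
          · exact absurd h hodd
          · obtain ⟨u, hu⟩ := h; exact ⟨u, by omega⟩
        have h1 : (s * t + 2 * s - 1) / (2 * s) = u + 1 := by
          have heq : s * t + 2 * s - 1 = (s - 1) + 2 * s * (u + 1) := by
            have h3 : s * t = 2 * s * u + s := by rw [hu]; ring
            have h4 : 2 * s * (u + 1) = 2 * s * u + 2 * s := by ring
            omega
          rw [heq, Nat.add_mul_div_left _ _ (by omega : 0 < 2 * s),
            Nat.div_eq_of_lt (by omega)]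
          omega
        have h2 : (t + 1) / 2 = u + 1 := by omega
        rw [h1, h2, ← hqdef]
        have : q ≤ q ^ (u + 1) := Nat.le_self_pow (by omega) q
        omega
    omega
  -- the set is the image of range t
  have hset : { x : ℕ | ∃ ℓ : ℕ, x = b * p ^ (s * ℓ) % (p ^ (s * t) - 1) }
      = ↑((Finset.range t).image f) := by
    ext x
    simp only [Set.mem_setOf_eq, Finset.coe_image, Finset.coe_range, Set.mem_image,
      Set.mem_Iio]
    constructor
    · rintro ⟨ℓ, rfl⟩
      refine ⟨ℓ % t, Nat.mod_lt _ (by omega), ?_⟩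
      rw [← hred ℓ]
      show b * q ^ ℓ % n = b * p ^ (s * ℓ) % (p ^ (s * t) - 1)
      rw [hqdef, ← pow_mul, hndef]
    · rintro ⟨ℓ, _, rfl⟩
      refine ⟨ℓ, ?_⟩
      show b * q ^ ℓ % n = b * p ^ (s * ℓ) % (p ^ (s * t) - 1)
      rw [hqdef, ← pow_mul, hndef]
  rw [hset, Set.ncard_coe_finset, hts,
    Finset.card_image_of_injOn (fun i hi j hj hij => by
      simp only [Finset.mem_coe, Finset.mem_range] at hi hj
      rcases le_total i j with h | h
      · exact hinj i j hi hj h hij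
      · exact (hinj j i hj hi h hij.symm).symm),
    Finset.card_range]
end

section
/- Let p be a prime and let s, m be positive integers such that s divides m and s ≠ m. Set n = p^m − 1. Then for all integers a, b with 0 < a < B(p,m,s) and 0 < b < B(p,m,s), the cyclotomic coset I_a is disjoint from the reciprocal coset I_{n−b}; that is, a·p^{sℓ} mod n ≠ (n−b)·p^{sℓ'} mod n for all nonnegative integers ℓ, ℓ'. -/
private lemma bnd_aux (q T x y u : ℕ) (hq : 2 ≤ q) (hT : 2 ≤ T)
    (hx : x < (if Even T then q^(T/2) - 1 else q^(T/2+1) - q + 1))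
    (hy : y < (if Even T then q^(T/2) - 1 else q^(T/2+1) - q + 1))
    (hu : u ≤ T/2) :
    x * q^u + y < q^T - 1 := by
  by_cases hev : Even T
  · rw [if_pos hev] at hx hy
    obtain ⟨r, rfl⟩ := hev
    have hr : (r + r)/2 = r := by omega
    rw [hr] at hx hy hu
    have hQ2 : 2 ≤ q^r := le_trans hq (Nat.le_self_pow (by omega) q)
    have hqu : q^u ≤ q^r := Nat.pow_le_pow_right (by omega) hu
    have h1 : x * q^u ≤ x * q^r := Nat.mul_le_mul le_rfl hqu
    have h2 : (x+1) * q^r ≤ (q^r) * (q^r) := Nat.mul_le_mul (by omega) le_rfl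
    have h3 : q^r * q^r = q^(r+r) := by rw [← pow_add]
    have h4 : (x+1) * q^r = x * q^r + q^r := by ring
    omega
  · rw [if_neg hev] at hx hy
    have hodd : Odd T := Nat.not_even_iff_odd.mp hev
    obtain ⟨r, rfl⟩ := hodd
    have hr : (2*r+1)/2 = r := by omega
    rw [hr] at hx hy hu
    have hqA : q ≤ q^(r+1) := Nat.le_self_pow (by omega) q
    have hqu : q^u ≤ q^r := Nat.pow_le_pow_right (by omega) hu
    have h1 : x * q^u ≤ x * q^r := Nat.mul_le_mul le_rfl hqu
    have h2 : (x + q) * q^r ≤ q^(r+1) * q^r := Nat.mul_le_mul (by omega) le_rfl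
    have h3 : q^(r+1) * q^r = q^(2*r+1) := by rw [← pow_add]; congr 1; omega
    have h4 : (x + q) * q^r = x * q^r + q * q^r := by ring
    have h5 : q * q^r = q^(r+1) := by rw [← pow_succ']
    omega

private lemma bval_eq (p s t' : ℕ) (hs : 0 < s) :
    (if Even ((s*(t'+2)) / s) then (p ^ s) ^ ((s*(t'+2)) / (2 * s)) - 1
      else (p ^ s) ^ (((s*(t'+2)) + 2 * s - 1) / (2 * s)) - p ^ s + 1)
    = (if Even (t'+2) then (p^s)^((t'+2)/2) - 1 else (p^s)^((t'+2)/2+1) - (p^s) + 1) := by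
  have h1 : s*(t'+2)/s = t'+2 := Nat.mul_div_cancel_left _ hs
  rw [h1]
  by_cases hev : Even (t'+2)
  · rw [if_pos hev, if_pos hev]
    have : s*(t'+2)/(2*s) = (t'+2)/2 := by
      rw [mul_comm 2 s]
      exact Nat.mul_div_mul_left _ _ hs
    rw [this]
  · rw [if_neg hev, if_neg hev]
    obtain ⟨r, hr⟩ := Nat.not_even_iff_odd.mp hev
    have hdiv : (s*(t'+2) + 2*s - 1)/(2*s) = (t'+2)/2 + 1 := by
      rw [hr]
      have e0 : s*(2*r+1) + 2*s = s + 2*s*(r+1) := by ring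
      have e1 : s*(2*r+1) + 2*s - 1 = (s-1) + 2*s*(r+1) := by omega
      rw [e1, Nat.add_mul_div_left _ _ (by omega : 0 < 2*s), Nat.div_eq_of_lt (by omega)]
      omega
    rw [hdiv]

/-- For `0 < a, b < B(p,m,s)`, the cyclotomic coset `I_a` is disjoint from
the reciprocal coset `I_{n-b}`, where `n = p^m - 1`. -/
theorem stmt_17 (p s m : ℕ) (hp : p.Prime) (hs : 0 < s) (hm : 0 < m)
    (hsm : s ∣ m) (hne : s ≠ m) (a b : ℕ) (ha : 0 < a) (haB : a < Bval p m s)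
    (hb : 0 < b) (hbB : b < Bval p m s) :
    ∀ ℓ ℓ' : ℕ,
      a * p ^ (s * ℓ) % (p ^ m - 1) ≠ ((p ^ m - 1) - b) * p ^ (s * ℓ') % (p ^ m - 1) := by
  intro ℓ ℓ' h
  have hp2 : 2 ≤ p := hp.two_le
  obtain ⟨t, rfl⟩ := hsm
  have ht2 : 2 ≤ t := by
    rcases t with _ | _ | t
    · simp at hm
    · exact absurd (mul_one s).symm hne
    · omega
  obtain ⟨t', rfl⟩ : ∃ t'', t = t'' + 2 := ⟨t - 2, by omega⟩
  clear ht2 hne hm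
  set n : ℕ := p ^ (s * (t' + 2)) - 1 with hn
  set q : ℕ := p ^ s with hqdef
  have hq2 : 2 ≤ q := le_trans hp2 (Nat.le_self_pow (by omega) p)
  have hqt : p ^ (s * (t'+2)) = q ^ (t'+2) := pow_mul p s _
  have hq4 : 4 ≤ q ^ (t'+2) := by
    calc (4:ℕ) = 2^2 := rfl
    _ ≤ q^2 := Nat.pow_le_pow_left hq2 2
    _ ≤ q^(t'+2) := Nat.pow_le_pow_right (by omega) (by omega)
  have hn' : n = q^(t'+2) - 1 := by rw [hn, hqt]
  have hn3 : 3 ≤ n := by omega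
  haveI : NeZero n := ⟨by omega⟩
  -- rewrite the bounds
  have hBval : Bval p (s*(t'+2)) s
      = (if Even (t'+2) then q^((t'+2)/2) - 1 else q^((t'+2)/2+1) - q + 1) := by
    unfold Bval
    exact bval_eq p s t' hs
  rw [hBval] at haB hbB
  -- b < n
  have hbn : b < n := by
    have := bnd_aux q (t'+2) 0 b 0 hq2 (by omega) (by omega) hbB (Nat.zero_le _)
    simpa [hn'] using this
  -- the ZMod n equation
  have hc := congrArg (fun z : ℕ => (z : ZMod n)) h
  simp only [ZMod.natCast_mod] at hc
  rw [Nat.cast_mul, Nat.cast_mul, Nat.cast_sub hbn.le, Nat.cast_pow, Nat.cast_pow,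
    ZMod.natCast_self] at hc
  have heq : (a : ZMod n) * (p:ZMod n)^(s*ℓ) + (b:ZMod n) * (p:ZMod n)^(s*ℓ') = 0 := by
    rw [hc]; ring
  have hpm1 : p ^ (s*(t'+2)) = n + 1 := by omega
  have hX1 : (p:ZMod n)^(s*(t'+2)) = 1 := by
    calc (p:ZMod n)^(s*(t'+2)) = ((p^(s*(t'+2)) : ℕ) : ZMod n) := by push_cast; rfl
    _ = ((n + 1 : ℕ) : ZMod n) := by rw [hpm1]
    _ = 1 := by rw [Nat.cast_add, ZMod.natCast_self, Nat.cast_one, zero_add]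
  have hred : ∀ w : ℕ, (p:ZMod n)^(s*w) = (p:ZMod n)^(s*(w % (t'+2))) := by
    intro w
    conv_lhs => rw [← Nat.div_add_mod w (t'+2)]
    rw [Nat.mul_add, ← Nat.mul_assoc, pow_add, pow_mul, hX1, one_pow, one_mul]
  -- the two reduced equations
  have h1 : (a:ZMod n) * (p:ZMod n)^(s*((ℓ + (t'+1)*ℓ') % (t'+2))) + (b:ZMod n) = 0 := by
    have key : (a:ZMod n) * (p:ZMod n)^(s*(ℓ + (t'+1)*ℓ'))
        + (b:ZMod n) * (p:ZMod n)^((s*(t'+2))*ℓ') = 0 := by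
      have e1 : s*(ℓ + (t'+1)*ℓ') = s*ℓ + s*((t'+1)*ℓ') := by ring
      have e2 : (s*(t'+2))*ℓ' = s*ℓ' + s*((t'+1)*ℓ') := by ring
      rw [e1, e2, pow_add, pow_add]
      linear_combination heq * (p:ZMod n)^(s*((t'+1)*ℓ'))
    have hone : (p:ZMod n)^((s*(t'+2))*ℓ') = 1 := by rw [pow_mul, hX1, one_pow]
    rw [hone, mul_one, hred] at key
    exact key
  have h2 : (b:ZMod n) * (p:ZMod n)^(s*((ℓ' + (t'+1)*ℓ) % (t'+2))) + (a:ZMod n) = 0 := by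
    have heq' : (b : ZMod n) * (p:ZMod n)^(s*ℓ') + (a:ZMod n) * (p:ZMod n)^(s*ℓ) = 0 := by
      rw [add_comm]; exact heq
    have key : (b:ZMod n) * (p:ZMod n)^(s*(ℓ' + (t'+1)*ℓ))
        + (a:ZMod n) * (p:ZMod n)^((s*(t'+2))*ℓ) = 0 := by
      have e1 : s*(ℓ' + (t'+1)*ℓ) = s*ℓ' + s*((t'+1)*ℓ) := by ring
      have e2 : (s*(t'+2))*ℓ = s*ℓ + s*((t'+1)*ℓ) := by ring
      rw [e1, e2, pow_add, pow_add]
      linear_combination heq' * (p:ZMod n)^(s*((t'+1)*ℓ))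
    have hone : (p:ZMod n)^((s*(t'+2))*ℓ) = 1 := by rw [pow_mul, hX1, one_pow]
    rw [hone, mul_one, hred] at key
    exact key
  -- contradiction machine
  have contra : ∀ x y u : ℕ, 0 < y →
      x < (if Even (t'+2) then q^((t'+2)/2) - 1 else q^((t'+2)/2+1) - q + 1) →
      y < (if Even (t'+2) then q^((t'+2)/2) - 1 else q^((t'+2)/2+1) - q + 1) →
      u ≤ (t'+2)/2 →
      (x:ZMod n) * (p:ZMod n)^(s*u) + (y:ZMod n) = 0 → False := by
    intro x y u hy hxB hyB hu hz
    have hlt : x * q^u + y < n := by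
      rw [hn']; exact bnd_aux q (t'+2) x y u hq2 (by omega) hxB hyB hu
    have hcast : ((x * p^(s*u) + y : ℕ) : ZMod n) = 0 := by push_cast; exact hz
    have hdvd : n ∣ x * p^(s*u) + y := (ZMod.natCast_eq_zero_iff _ n).mp hcast
    have hle : n ≤ x * p^(s*u) + y := Nat.le_of_dvd (by omega) hdvd
    rw [pow_mul] at hle
    rw [hqdef] at hlt
    omega
  set u := (ℓ + (t'+1)*ℓ') % (t'+2) with hu
  set v := (ℓ' + (t'+1)*ℓ) % (t'+2) with hv
  rcases le_or_gt u ((t'+2)/2) with hle | hgt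
  · exact contra a b u hb haB hbB hle h1
  · have hu' : u < t'+2 := Nat.mod_lt _ (by omega)
    have hv' : v < t'+2 := Nat.mod_lt _ (by omega)
    have huv : (u + v) % (t'+2) = 0 := by
      rw [hu, hv, ← Nat.add_mod]
      have e : (ℓ + (t'+1)*ℓ') + (ℓ' + (t'+1)*ℓ) = (t'+2) * (ℓ + ℓ') := by ring
      rw [e, Nat.mul_mod_right]
    obtain ⟨k, hk⟩ := Nat.dvd_of_mod_eq_zero huv
    have hk1 : u + v = t' + 2 := by
      rcases k with _ | _ | k
      · omega
      · omega
      · exfalso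
        have h2k : (t'+2)*2 ≤ u + v := by
          rw [hk]; exact Nat.mul_le_mul le_rfl (by omega)
        omega
    have hvle : v ≤ (t'+2)/2 := by omega
    exact contra b a v ha hbB haB hvle h2
end

section
/- Let p be a prime and let s, m be positive integers such that s divides m and s ≠ m. Set n = p^m − 1. Let a be an integer with 0 < a < B(p,m,s) such that p^s does not divide a. Then a is the minimal element of its cyclotomic coset; that is, a·p^{sℓ} mod n ≥ a for every nonnegative integer ℓ. -/
lemma key_lemma (q t : ℕ) (hq : 2 ≤ q) (ht : 2 ≤ t) (a : ℕ) (ha : 0 < a)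
    (haB : a < if Even t then q ^ (t / 2) - 1 else q ^ ((t + 1) / 2) - q + 1)
    (hqa : ¬ q ∣ a) (ℓ : ℕ) : a ≤ a * q ^ ℓ % (q ^ t - 1) := by
  have hq0 : 0 < q := by omega
  have hqt1 : 1 ≤ q ^ t := Nat.one_le_pow _ _ hq0
  set n := q ^ t - 1 with hn
  have hqt2 : q ^ t = n + 1 := by omega
  have hcc1 : 1 ≤ (t + 1) / 2 := by omega
  have hqcc : q ≤ q ^ ((t + 1) / 2) := by
    calc q = q ^ 1 := (pow_one q).symm
    _ ≤ q ^ ((t + 1) / 2) := Nat.pow_le_pow_right hq0 hcc1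
  have hB : (if Even t then q ^ (t / 2) - 1 else q ^ ((t + 1) / 2) - q + 1)
      ≤ q ^ ((t + 1) / 2) := by
    split_ifs with h
    · rw [Nat.even_iff] at h
      have ht2 : t / 2 = (t + 1) / 2 := by omega
      rw [ht2]; omega
    · omega
  have haB2 : a < q ^ ((t + 1) / 2) := lt_of_lt_of_le haB hB
  have hccle : (t + 1) / 2 ≤ t - 1 := by omega
  have h1 : q ^ ((t + 1) / 2) ≤ q ^ (t - 1) := Nat.pow_le_pow_right hq0 hccle
  have h2 : q ^ (t - 1) * q = q ^ t := by rw [← pow_succ]; congr 1; omega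
  have h3 : 2 ≤ q ^ (t - 1) := by
    calc 2 ≤ q := hq
    _ = q ^ 1 := (pow_one q).symm
    _ ≤ q ^ (t - 1) := Nat.pow_le_pow_right hq0 (by omega)
  have h4 : q ^ (t - 1) * 2 ≤ q ^ (t - 1) * q := Nat.mul_le_mul_left _ hq
  have han : a < n := by omega
  have hmod : q ^ t % n = 1 % n := by rw [hqt2]; exact Nat.add_mod_left n 1
  have hred : a * q ^ ℓ % n = a * q ^ (ℓ % t) % n := by
    have e1 : a * q ^ ℓ = a * q ^ (ℓ % t) * (q ^ t) ^ (ℓ / t) := by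
      rw [mul_assoc, ← pow_mul, ← pow_add, Nat.mod_add_div]
    rw [e1]
    have hm2 : (q ^ t) ^ (ℓ / t) ≡ 1 ^ (ℓ / t) [MOD n] := Nat.ModEq.pow _ hmod
    calc a * q ^ (ℓ % t) * (q ^ t) ^ (ℓ / t) % n
        = a * q ^ (ℓ % t) * 1 ^ (ℓ / t) % n := (Nat.ModEq.mul_left _ hm2)
      _ = a * q ^ (ℓ % t) % n := by rw [one_pow, mul_one]
  rw [hred]
  obtain ⟨j, hj⟩ : ∃ j, j = ℓ % t := ⟨_, rfl⟩
  rw [← hj]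
  have hjt : j < t := hj ▸ Nat.mod_lt _ (by omega : 0 < t)
  rcases Nat.eq_zero_or_pos j with hj0 | hj1
  · rw [hj0, pow_zero, mul_one, Nat.mod_eq_of_lt han]
  obtain ⟨k, hk⟩ : ∃ k, k = t - j := ⟨_, rfl⟩
  have hk1 : 1 ≤ k := by omega
  have hqk0 : 0 < q ^ k := Nat.pow_pos hq0
  have hqj0 : 0 < q ^ j := Nat.pow_pos hq0
  obtain ⟨u, v, huv, hvlt, hvdef⟩ :
      ∃ u v, q ^ k * u + v = a ∧ v < q ^ k ∧ v = a % q ^ k :=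
    ⟨a / q ^ k, a % q ^ k, Nat.div_add_mod a _, Nat.mod_lt _ hqk0, rfl⟩
  have hkj : q ^ k * q ^ j = q ^ t := by rw [← pow_add]; congr 1; omega
  have hqjq : q ≤ q ^ j := by
    calc q = q ^ 1 := (pow_one q).symm
    _ ≤ q ^ j := Nat.pow_le_pow_right hq0 hj1
  have hexp : a * q ^ j = n * u + (u + v * q ^ j) := by
    calc a * q ^ j = (q ^ k * u + v) * q ^ j := by rw [huv]
    _ = u * (q ^ k * q ^ j) + v * q ^ j := by ring
    _ = u * (n + 1) + v * q ^ j := by rw [hkj, hqt2]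
    _ = n * u + (u + v * q ^ j) := by ring
  have hvq : v * q ^ j + q ^ j ≤ q ^ t := by
    calc v * q ^ j + q ^ j = (v + 1) * q ^ j := by ring
    _ ≤ q ^ k * q ^ j := Nat.mul_le_mul_right _ (by omega)
    _ = q ^ t := hkj
  have hboth : a ≤ u + v * q ^ j ∧ u + v * q ^ j < n := by
    rcases Nat.eq_zero_or_pos u with hu0 | hu1
    · simp only [hu0, mul_zero, zero_add] at huv
      have hle : v ≤ v * q ^ j := Nat.le_mul_of_pos_right v hqj0
      omega
    · have hqka : q ^ k ≤ a := by
        calc q ^ k = q ^ k * 1 := (mul_one _).symm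
        _ ≤ q ^ k * u := Nat.mul_le_mul_left _ hu1
        _ ≤ a := by omega
      have hklt : k < (t + 1) / 2 := by
        have hlt : q ^ k < q ^ ((t + 1) / 2) := lt_of_le_of_lt hqka haB2
        exact (Nat.pow_lt_pow_iff_right (by omega : 1 < q)).mp hlt
      have hjcc : (t + 1) / 2 ≤ j := by omega
      have hja : a < q ^ j :=
        lt_of_lt_of_le haB2 (Nat.pow_le_pow_right hq0 hjcc)
      have huk : u ≤ q ^ k * u := Nat.le_mul_of_pos_left _ hqk0
      have hv1 : 1 ≤ v := by
        rcases Nat.eq_zero_or_pos v with h0 | hpos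
        · exfalso
          rw [h0] at hvdef
          exact hqa (dvd_trans (dvd_pow_self q (by omega))
            (Nat.dvd_of_mod_eq_zero hvdef.symm))
        · exact hpos
      have hle2 : q ^ j ≤ v * q ^ j := Nat.le_mul_of_pos_left _ hv1
      omega
  have hfin : a * q ^ j % n = u + v * q ^ j := by
    rw [hexp, Nat.mul_add_mod, Nat.mod_eq_of_lt hboth.2]
  rw [hfin]
  exact hboth.1

lemma Bval_eq (p s : ℕ) (hs : 0 < s) (t : ℕ) :
    Bval p (s * t) s =
      if Even t then (p ^ s) ^ (t / 2) - 1 else (p ^ s) ^ ((t + 1) / 2) - p ^ s + 1 := by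
  have hst : s * t / s = t := Nat.mul_div_cancel_left t hs
  unfold Bval
  rw [hst]
  rcases Nat.even_or_odd t with he | ho
  · rw [if_pos he, if_pos he]
    have e1 : s * t / (2 * s) = t / 2 := by
      rw [mul_comm 2 s, Nat.mul_div_mul_left t 2 hs]
    rw [e1]
  · have hne : ¬ Even t := Nat.not_even_iff_odd.mpr ho
    rw [if_neg hne, if_neg hne]
    obtain ⟨w, hw⟩ := ho
    have h1 : s * t = 2 * (s * w) + s := by rw [hw]; ring
    have h2 : (2 * s) * (w + 1) = 2 * (s * w) + 2 * s := by ring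
    have e : s * t + 2 * s - 1 = (2 * s) * (w + 1) + (s - 1) := by omega
    have e2 : (t + 1) / 2 = w + 1 := by omega
    rw [e, Nat.mul_add_div (by omega), Nat.div_eq_of_lt (by omega), e2]

/-- If `0 < a < B(p,m,s)` and `p^s ∤ a`, then `a` is the minimal element of
its cyclotomic coset with respect to `n = p^m - 1` and `s`. -/
theorem stmt_18 (p s m : ℕ) (hp : p.Prime) (hs : 0 < s) (hm : 0 < m)
    (hsm : s ∣ m) (hne : s ≠ m) (a : ℕ) (ha : 0 < a) (haB : a < Bval p m s)
    (hdvd : ¬ p ^ s ∣ a) :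
    ∀ ℓ : ℕ, a ≤ a * p ^ (s * ℓ) % (p ^ m - 1) := by
  obtain ⟨t, rfl⟩ := hsm
  have hq : 2 ≤ p ^ s := Nat.one_lt_pow hs.ne' hp.one_lt
  have ht : 2 ≤ t := by
    rcases Nat.lt_or_ge t 2 with h | h
    · interval_cases t
      · simp at hm
      · simp at hne
    · exact h
  rw [Bval_eq p s hs t] at haB
  intro ℓ
  rw [pow_mul p s ℓ, pow_mul p s t]
  exact key_lemma (p ^ s) t hq ht a ha haB hdvd ℓ
end
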